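/- arXiv:1504.01175 — 8 statements merged into one kernel-verified Lean document; each statement's English description precedes it below -/
import Mathlib

section
/- Let K be a field of characteristic 2 and E the elliptic curve Y² + XY = X³ + AX² + B over K with B ≠ 0. For x₁, x₂, x₃ in the algebraic closure of K, one has (x₁x₂ + x₁x₃ + x₂x₃)² + x₁x₂x₃ + B = 0 if and only if there exist y₁, y₂, y₃ in the algebraic closure such that (xᵢ, yᵢ) lies on E for i = 1,2,3 and (x₁,y₁) + (x₂,y₂) + (x₃,y₃) = ∞ in the group law of E. -/
open WeierstrassCurve

set_option maxHeartbeats 1000000 in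
open Classical in
/-- In characteristic 2, for the elliptic curve `Y² + XY = X³ + AX² + B`
with `B ≠ 0`, elements `x₁ x₂ x₃` of the algebraic closure satisfy the third summation
polynomial `(x₁x₂ + x₁x₃ + x₂x₃)² + x₁x₂x₃ + B = 0` iff there are `y₁ y₂ y₃` such that
the points `(xᵢ, yᵢ)` lie on the curve and sum to the point at infinity. -/
theorem stmt0 {K : Type*} [Field K] [CharP K 2] (A B : K) (hB : B ≠ 0)
    (W : WeierstrassCurve.Affine (AlgebraicClosure K))
    (hW : W = { a₁ := 1, a₂ := algebraMap K (AlgebraicClosure K) A, a₃ := 0, a₄ := 0,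
                a₆ := algebraMap K (AlgebraicClosure K) B })
    (x₁ x₂ x₃ : AlgebraicClosure K) :
    (x₁ * x₂ + x₁ * x₃ + x₂ * x₃) ^ 2 + x₁ * x₂ * x₃ + algebraMap K (AlgebraicClosure K) B = 0 ↔
      ∃ (y₁ y₂ y₃ : AlgebraicClosure K) (h₁ : W.Nonsingular x₁ y₁) (h₂ : W.Nonsingular x₂ y₂)
        (h₃ : W.Nonsingular x₃ y₃),
        Affine.Point.some _ _ h₁ + Affine.Point.some _ _ h₂ + Affine.Point.some _ _ h₃ = 0 := by
  have ha1 : W.a₁ = 1 := by rw [hW]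
  have ha2 : W.a₂ = algebraMap K (AlgebraicClosure K) A := by rw [hW]
  have ha3 : W.a₃ = 0 := by rw [hW]
  have ha4 : W.a₄ = 0 := by rw [hW]
  have ha6 : W.a₆ = algebraMap K (AlgebraicClosure K) B := by rw [hW]
  set a : AlgebraicClosure K := algebraMap K (AlgebraicClosure K) A
  set b : AlgebraicClosure K := algebraMap K (AlgebraicClosure K) B
  have h2 : (2:AlgebraicClosure K) = 0 := by
    exact_mod_cast CharP.cast_eq_zero (AlgebraicClosure K) 2
  have hb : b ≠ 0 := (map_ne_zero _).mpr hB
  have hΔ : W.Δ = b := by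
    simp only [Δ, b₂, b₄, b₆, b₈, ha1, ha2, ha3, ha4, ha6]
    linear_combination (-2*a*b - 16*a^2*b - 32*a^3*b + 3*b - 4*a*b - 8*a^2*b - 4*b - 216*b^2)*h2
  have hns : ∀ x y : AlgebraicClosure K, W.Equation x y → W.Nonsingular x y :=
    fun x y h => (W.equation_iff_nonsingular_of_Δ_ne_zero (hΔ ▸ hb)).mp h
  have heq : ∀ x y : AlgebraicClosure K,
      W.Equation x y ↔ y^2 + x*y = x^3 + a*x^2 + b := by
    intro x y
    rw [W.equation_iff, ha1, ha2, ha3, ha4, ha6]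
    constructor <;> intro h <;> linear_combination h
  have hnegY : ∀ x y : AlgebraicClosure K, W.negY x y = y + x := by
    intro x y
    rw [Affine.negY, ha1, ha3]
    linear_combination (-y - x)*h2
  constructor
  · -- forward
    intro hS
    obtain ⟨lam, hlam⟩ := IsAlgClosed.exists_root
      (p := Polynomial.X^2 + Polynomial.X + Polynomial.C (x₁+x₂+x₃+a))
      (by intro h; rw [show ((Polynomial.X^2 + Polynomial.X + Polynomial.C (x₁+x₂+x₃+a) :
            Polynomial (AlgebraicClosure K))).degree = 2 by compute_degree!] at h; exact two_ne_zero h)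
    have hlam' : lam^2 + lam + (x₁+x₂+x₃+a) = 0 := by
      simpa using hlam
    have he₁ : W.Equation x₁ (lam*x₁ + (x₁*x₂ + x₁*x₃ + x₂*x₃)) := by
      rw [heq]; linear_combination x₁^2*hlam' - hS + (x₂^2*x₃^2 + x₁*x₂*x₃ + 2*x₁*x₂*x₃^2 + 2*x₁*x₂^2*x₃ + x₁^2*x₃^2 + 2*x₁^2*x₂*x₃ + x₁^2*x₂^2 - x₁^3 + lam*x₁*x₂*x₃ + lam*x₁^2*x₃ + lam*x₁^2*x₂ - a*x₁^2)*h2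
    have he₂ : W.Equation x₂ (lam*x₂ + (x₁*x₂ + x₁*x₃ + x₂*x₃)) := by
      rw [heq]; linear_combination x₂^2*hlam' - hS + (x₁^2*x₃^2 + x₂*x₁*x₃ + 2*x₂*x₁*x₃^2 + 2*x₂*x₁^2*x₃ + x₂^2*x₃^2 + 2*x₂^2*x₁*x₃ + x₂^2*x₁^2 - x₂^3 + lam*x₂*x₁*x₃ + lam*x₂^2*x₃ + lam*x₂^2*x₁ - a*x₂^2)*h2
    have he₃ : W.Equation x₃ (lam*x₃ + (x₁*x₂ + x₁*x₃ + x₂*x₃)) := by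
      rw [heq]; linear_combination x₃^2*hlam' - hS + (x₂^2*x₁^2 + x₃*x₂*x₁ + 2*x₃*x₂*x₁^2 + 2*x₃*x₂^2*x₁ + x₃^2*x₁^2 + 2*x₃^2*x₂*x₁ + x₃^2*x₂^2 - x₃^3 + lam*x₃*x₂*x₁ + lam*x₃^2*x₁ + lam*x₃^2*x₂ - a*x₃^2)*h2
    have h₁ := hns _ _ he₁
    have h₂ := hns _ _ he₂
    have h₃ := hns _ _ he₃
    refine ⟨_, _, _, h₁, h₂, h₃, ?_⟩
    have hxy : x₁ = x₂ → (lam*x₁ + (x₁*x₂ + x₁*x₃ + x₂*x₃))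
        ≠ W.negY x₂ (lam*x₂ + (x₁*x₂ + x₁*x₃ + x₂*x₃)) := by
      intro hx hy
      rw [hnegY] at hy
      have hx2 : x₂ = 0 := by linear_combination lam*hx - hy
      subst hx2
      exact hb (by linear_combination -hS + x₁*x₃^2*hx + b*h2)
    have hslope : W.slope x₁ x₂ (lam*x₁ + (x₁*x₂ + x₁*x₃ + x₂*x₃))
        (lam*x₂ + (x₁*x₂ + x₁*x₃ + x₂*x₃)) = lam := by
      by_cases hx : x₁ = x₂
      · have hy := hxy hx
        rw [Affine.slope_of_Y_ne hx hy, ha1, ha2, ha4, hnegY]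
        have hden : (lam*x₁ + (x₁*x₂ + x₁*x₃ + x₂*x₃))
            - ((lam*x₁ + (x₁*x₂ + x₁*x₃ + x₂*x₃)) + x₁) ≠ 0 := by
          intro h
          apply hy
          rw [hnegY, ← hx]
          linear_combination -h - x₁*h2
        rw [div_eq_iff hden]
        linear_combination (-(x₁+x₃))*hx + (2*x₁^2 + a*x₁ - x₁*x₂ - x₂*x₃)*h2
      · rw [Affine.slope_of_X_ne hx, div_eq_iff (sub_ne_zero.mpr hx)]
        ring
    have haddX : W.addX x₁ x₂ (W.slope x₁ x₂ (lam*x₁ + (x₁*x₂ + x₁*x₃ + x₂*x₃))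
        (lam*x₂ + (x₁*x₂ + x₁*x₃ + x₂*x₃))) = x₃ := by
      rw [hslope, Affine.addX, ha1, ha2]
      linear_combination hlam' + (-a-x₁-x₂-x₃)*h2
    have haddY : W.addY x₁ x₂ (lam*x₁ + (x₁*x₂ + x₁*x₃ + x₂*x₃))
        (W.slope x₁ x₂ (lam*x₁ + (x₁*x₂ + x₁*x₃ + x₂*x₃)) (lam*x₂ + (x₁*x₂ + x₁*x₃ + x₂*x₃)))
        = W.negY x₃ (lam*x₃ + (x₁*x₂ + x₁*x₃ + x₂*x₃)) := by
      rw [Affine.addY, Affine.negAddY, haddX, hslope, hnegY, hnegY]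
      ring
    rw [Affine.Point.add_some (fun h => hxy h.1 h.2)]
    exact Affine.Point.add_of_Y_eq haddX haddY
  · -- reverse
    rintro ⟨y₁, y₂, y₃, h₁, h₂, h₃, hsum⟩
    have e₁ := (heq _ _).mp h₁.1
    have e₂ := (heq _ _).mp h₂.1
    have hP : Affine.Point.some _ _ h₁ + Affine.Point.some _ _ h₂ = -(Affine.Point.some _ _ h₃) :=
      add_eq_zero_iff_eq_neg.mp hsum
    rw [Affine.Point.neg_some] at hP
    have hxy : x₁ = x₂ → y₁ ≠ W.negY x₂ y₂ := by
      intro hx hy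
      rw [Affine.Point.add_of_Y_eq hx hy] at hP
      exact Affine.Point.some_ne_zero _ hP.symm
    rw [Affine.Point.add_some (fun h => hxy h.1 h.2)] at hP
    obtain ⟨hx3, -⟩ := Affine.Point.some.inj hP
    by_cases hx : x₁ = x₂
    · -- tangent case
      have hy := hxy hx
      have hyy : y₁ = y₂ := Affine.Y_eq_of_Y_ne h₁.1 h₂.1 hx hy
      subst hyy
      subst hx
      have hx1 : x₁ ≠ 0 := fun h => hy (by rw [hnegY, h]; ring)
      obtain ⟨LL, hLL⟩ : ∃ l, W.slope x₁ x₁ y₁ y₁ = l := ⟨_, rfl⟩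
      have hden : y₁ - W.negY x₁ y₁ ≠ 0 := sub_ne_zero.mpr hy
      have hL : LL * (y₁ - W.negY x₁ y₁) = 3*x₁^2 + 2*a*x₁ + 0 - 1*y₁ := by
        rw [← hLL, Affine.slope_of_Y_ne rfl hy, ha1, ha2, ha4]
        exact div_mul_cancel₀ _ hden
      rw [hnegY] at hL
      rw [hLL, Affine.addX, ha1, ha2] at hx3
      have key : ((x₁ * x₁ + x₁ * x₃ + x₁ * x₃) ^ 2 + x₁ * x₁ * x₃ + b) * x₁^2 = 0 := by
        linear_combination x₁^4*hx3 + (x₁^2*y₁ + x₁^3 + x₁^4 + LL*x₁^3)*hL + x₁^2*e₁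
          + (-x₁^2*y₁^2 - x₁^3*y₁ + x₁^4*y₁ + x₁^4*x₃ + 2*x₁^4*x₃^2 + 3*x₁^5 + 2*x₁^5*x₃ + 2*x₁^6 + b*x₁^2 + a*x₁^3*y₁ + 2*a*x₁^4 + a*x₁^5 + 2*LL*x₁^5 + LL*a*x₁^4)*h2
      rcases mul_eq_zero.mp key with h | h
      · exact h
      · exact absurd (pow_eq_zero_iff (by norm_num) |>.mp h) hx1
    · have hd : x₁ - x₂ ≠ 0 := sub_ne_zero.mpr hx
      obtain ⟨LL, hLL⟩ : ∃ l, W.slope x₁ x₂ y₁ y₂ = l := ⟨_, rfl⟩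
      have hL : LL * (x₁ - x₂) = y₁ - y₂ := by
        rw [← hLL, Affine.slope_of_X_ne hx]
        exact div_mul_cancel₀ _ hd
      rw [hLL, Affine.addX, ha1, ha2] at hx3
      have key : ((x₁ * x₂ + x₁ * x₃ + x₂ * x₃) ^ 2 + x₁ * x₂ * x₃ + b) * (x₁-x₂)^2 = 0 := by
        linear_combination
          (x₂^4*a + x₂^4*x₃ + x₂^5 + x₁*x₂^3 + x₁*x₂^4 + x₁^3*x₂ + x₁^4*a + x₁^4*x₃ + x₁^4*x₂ + x₁^5 + LL*x₂^4 + LL*x₁^4 + LL^2*x₂^4 + LL^2*x₁^4)*hx3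
          + (y₂^3 + y₁*y₂^2 + y₁^2*y₂ + y₁^3 + x₂^2*y₂ + x₂^2*y₁ + x₁*x₂*y₂ + x₁*x₂*y₁ + x₁*x₂^2 + x₁^2*y₂ + x₁^2*y₁ + x₁^2*x₂ + LL*x₂*y₂^2 + LL*x₂*y₁^2 + LL*x₂^3 + LL*x₁*y₂^2 + LL*x₁*y₁^2 + LL*x₁^3 + LL^2*x₂^2*y₂ + LL^2*x₂^2*y₁ + LL^2*x₁^2*y₂ + LL^2*x₁^2*y₁ + LL^3*x₂^3 + LL^3*x₁*x₂^2 + LL^3*x₁^2*x₂ + LL^3*x₁^3)*hL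
          + (y₂^2 + y₁^2 + x₂*y₂ + x₂^2 + x₂^2*a + x₂^3 + x₁*y₁ + x₁*x₂ + x₁^2*a + x₁^3)*e₁
          + (y₂^2 + y₁^2 + x₂*y₂ + x₂^2*a + x₂^3 + x₁*y₁ + x₁*x₂ + x₁^2 + x₁^2*a + x₁^3)*e₂
          + (-y₂^4 - y₁^2*y₂^2 - x₂*y₂^3 - x₂*y₁^2*y₂ - x₂^2*y₂^2 + x₂^4*x₃^2 + x₂^5*x₃ + x₂^6 - x₁*y₁*y₂^2 - x₁*y₁^3 - x₁*x₂*y₂^2 - x₁*x₂*y₁*y₂ - x₁*x₂^2*y₂ + x₁*x₂^3*x₃ + x₁*x₂^4 + 2*x₁*x₂^4*x₃ + x₁*x₂^5 - x₁^2*y₂^2 - x₁^2*x₂*y₂ - x₁^2*x₂^2*x₃ - x₁^2*x₂^2*x₃^2 + x₁^2*x₂^3 - x₁^2*x₂^3*x₃ + x₁^2*x₂^4 + x₁^3*x₂*x₃ + x₁^3*x₂^2 - x₁^3*x₂^2*x₃ + x₁^4*x₃^2 + x₁^4*x₂ + 2*x₁^4*x₂*x₃ + x₁^4*x₂^2 +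 x₁^5*x₃ + x₁^5*x₂ + x₁^6 + b*y₂^2 + b*y₁^2 + b*x₂*y₂ + b*x₂^2 + b*x₂^3 + b*x₁*y₁ + b*x₁^2 + b*x₁^3 + a*x₂^4*x₃ + 2*a*x₂^5 + a*x₁*x₂^3 + a*x₁*x₂^4 + a*x₁^2*x₂^2 + a*x₁^2*x₂^3 + a*x₁^3*x₂ + a*x₁^3*x₂^2 + a*x₁^4*x₃ + a*x₁^4*x₂ + 2*a*x₁^5 + a*b*x₂^2 + a*b*x₁^2 + a^2*x₂^4 + a^2*x₁^2*x₂^2 + a^2*x₁^4 + LL*x₂*y₁*y₂^2 + LL*x₂*y₁^3 + LL*x₂^3*y₁ - LL*x₁*y₂^3 - LL*x₁*y₁^2*y₂ - LL*x₁^3*y₂ - LL*x₁^3*x₂ + LL^2*x₂^2*y₁^2 - LL^2*x₁*x₂^3 - LL^2*x₁^2*y₂^2 - LL^2*x₁^4 + LL^3*x₂^3*y₁ - LL^3*x₂^4 - LL^3*x₁*x₂^2*y₂ + LL^3*x₁^2*x₂*y₁ - LL^3*x₁^3*y₂ - LL^3*x₁^4 - LL^4*x₁^4)*h2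
      rcases mul_eq_zero.mp key with h | h
      · exact h
      · exact absurd (pow_eq_zero_iff (by norm_num) |>.mp h) hd
end

section
/- Let K be a field of characteristic not 2 or 3 and E the elliptic curve Y² = X³ + AX + B over K. For x₁, x₂, x₃ in the algebraic closure of K, one has S₃(x₁,x₂,x₃) = 0, where S₃(x₁,x₂,x₃) = (x₁−x₂)²x₃² − 2[(x₁+x₂)(x₁x₂+A) + 2B]x₃ + (x₁x₂−A)² − 4B(x₁+x₂), if and only if there exist y₁, y₂, y₃ in the algebraic closure with (xᵢ,yᵢ) on E and (x₁,y₁) + (x₂,y₂) + (x₃,y₃) = ∞. -/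
open WeierstrassCurve

open Classical in
/-- In characteristic ≥ 5, for the elliptic curve `Y² = X³ + AX + B`
(nonsingular: `4A³ + 27B² ≠ 0`), elements `x₁ x₂ x₃` of the algebraic closure satisfy
`S₃(x₁,x₂,x₃) = (x₁−x₂)²x₃² − 2[(x₁+x₂)(x₁x₂+A)+2B]x₃ + (x₁x₂−A)² − 4B(x₁+x₂) = 0`
iff there are `y₁ y₂ y₃` with the points `(xᵢ,yᵢ)` on the curve summing to infinity. -/
theorem stmt1 {K : Type*} [Field K] (hchar2 : ringChar K ≠ 2) (hchar3 : ringChar K ≠ 3)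
    (A B : K) (hns : 4 * A ^ 3 + 27 * B ^ 2 ≠ 0)
    (W : WeierstrassCurve.Affine (AlgebraicClosure K))
    (hW : W = { a₁ := 0, a₂ := 0, a₃ := 0, a₄ := algebraMap K (AlgebraicClosure K) A,
                a₆ := algebraMap K (AlgebraicClosure K) B })
    (x₁ x₂ x₃ : AlgebraicClosure K) :
    (x₁ - x₂) ^ 2 * x₃ ^ 2
        - 2 * ((x₁ + x₂) * (x₁ * x₂ + algebraMap K (AlgebraicClosure K) A)
            + 2 * algebraMap K (AlgebraicClosure K) B) * x₃
        + (x₁ * x₂ - algebraMap K (AlgebraicClosure K) A) ^ 2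
        - 4 * algebraMap K (AlgebraicClosure K) B * (x₁ + x₂) = 0 ↔
      ∃ (y₁ y₂ y₃ : AlgebraicClosure K) (h₁ : W.Nonsingular x₁ y₁) (h₂ : W.Nonsingular x₂ y₂)
        (h₃ : W.Nonsingular x₃ y₃),
        Affine.Point.some _ _ h₁ + Affine.Point.some _ _ h₂ + Affine.Point.some _ _ h₃ = 0 := by
  set a : AlgebraicClosure K := algebraMap K (AlgebraicClosure K) A with haA
  set b : AlgebraicClosure K := algebraMap K (AlgebraicClosure K) B with hbB
  have ha1 : W.a₁ = 0 := by rw [hW]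
  have ha2 : W.a₂ = 0 := by rw [hW]
  have ha3 : W.a₃ = 0 := by rw [hW]
  have ha4 : W.a₄ = a := by rw [hW]
  have ha6 : W.a₆ = b := by rw [hW]
  -- characteristic facts
  have h2 : (2 : AlgebraicClosure K) ≠ 0 := by
    have h2K : (2 : K) ≠ 0 := Ring.two_ne_zero hchar2
    rw [show (2 : AlgebraicClosure K) = algebraMap K (AlgebraicClosure K) 2 from
      (map_ofNat _ 2).symm]
    exact (map_ne_zero _).mpr h2K
  have h3 : (3 : AlgebraicClosure K) ≠ 0 := by
    have h3K : (3 : K) ≠ 0 := fun h =>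
      hchar3 (CharP.ringChar_of_prime_eq_zero Nat.prime_three h)
    rw [show (3 : AlgebraicClosure K) = algebraMap K (AlgebraicClosure K) 3 from
      (map_ofNat _ 3).symm]
    exact (map_ne_zero _).mpr h3K
  have hab : 4 * a ^ 3 + 27 * b ^ 2 ≠ 0 := by
    have : algebraMap K (AlgebraicClosure K) (4 * A ^ 3 + 27 * B ^ 2) ≠ 0 :=
      (map_ne_zero (algebraMap K (AlgebraicClosure K))).mpr hns
    simpa [map_add, map_mul, map_pow, map_ofNat, haA, hbB] using this
  have hΔ : W.Δ ≠ 0 := by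
    have hΔval : W.Δ = -16 * (4 * a ^ 3 + 27 * b ^ 2) := by
      simp only [WeierstrassCurve.Δ, WeierstrassCurve.b₂, WeierstrassCurve.b₄,
        WeierstrassCurve.b₆, WeierstrassCurve.b₈, ha1, ha2, ha3, ha4, ha6]
      ring
    rw [hΔval]
    refine mul_ne_zero ?_ hab
    have : (16 : AlgebraicClosure K) = 2 ^ 4 := by norm_num
    simp only [neg_ne_zero, this]
    exact pow_ne_zero 4 h2
  have heq : ∀ x y : AlgebraicClosure K, W.Equation x y ↔ y ^ 2 = x ^ 3 + a * x + b := by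
    intro x y
    rw [Affine.equation_iff, ha1, ha2, ha3, ha4, ha6]
    constructor <;> intro h <;> linear_combination h
  have hneg : ∀ x y : AlgebraicClosure K, W.negY x y = -y := by
    intro x y; rw [Affine.negY, ha1, ha3]; ring
  have nonsing : ∀ x y : AlgebraicClosure K, y ^ 2 = x ^ 3 + a * x + b → W.Nonsingular x y :=
    fun x y h => (W.equation_iff_nonsingular_of_Δ_ne_zero hΔ).mp ((heq x y).mpr h)
  have sqrt : ∀ c : AlgebraicClosure K, ∃ y : AlgebraicClosure K, y ^ 2 = c :=
    fun c => IsAlgClosed.exists_pow_nat_eq c (n := 2) (by norm_num)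
  constructor
  · -- forward direction
    intro hS
    by_cases hx : x₁ = x₂
    · subst hx
      by_cases hf : x₁ ^ 3 + a * x₁ + b = 0
      · exfalso
        have h9 : (3 * x₁ ^ 2 + a) ^ 2 = 0 := by linear_combination hS + (8 * x₁ + 4 * x₃) * hf
        have h3a : 3 * x₁ ^ 2 + a = 0 := by
          exact (pow_eq_zero_iff two_ne_zero).mp h9
        refine hab ?_
        linear_combination (4 * (a ^ 2 - 3 * a * x₁ ^ 2 + 9 * x₁ ^ 4)
          - 27 * x₁ * (b + 2 * x₁ ^ 3)) * h3a + 27 * (b + 2 * x₁ ^ 3) * hf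
      · obtain ⟨y₁, e1⟩ := sqrt (x₁ ^ 3 + a * x₁ + b)
        have hy1 : y₁ ≠ 0 := by rintro rfl; exact hf (by linear_combination -e1)
        have h₁ := nonsing x₁ y₁ e1
        have hy : y₁ ≠ W.negY x₁ y₁ := by
          rw [hneg]
          intro hc
          have h2y : 2 * y₁ = 0 := by linear_combination hc
          exact hy1 ((mul_eq_zero.mp h2y).resolve_left h2)
        have hL : W.slope x₁ x₁ y₁ y₁ = (3 * x₁ ^ 2 + a) / (2 * y₁) := by
          rw [Affine.slope_of_Y_ne rfl hy, hneg, ha1, ha2, ha4]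
          congr 1 <;> ring
        have haddx : W.addX x₁ x₁ (W.slope x₁ x₁ y₁ y₁) = x₃ := by
          rw [Affine.addX, hL, ha1, ha2]
          have h2y : (2 * y₁) ≠ 0 := mul_ne_zero h2 hy1
          field_simp
          linear_combination (-4 * x₃ - 8 * x₁) * e1 + hS
        subst haddx
        exact ⟨y₁, y₁, _, h₁, h₁, Affine.nonsingular_negAdd h₁ h₁ fun h => hy h.2, by
          rw [Affine.Point.add_self_of_Y_ne' hy]; exact neg_add_cancel _⟩
    · obtain ⟨y₁, e1⟩ := sqrt (x₁ ^ 3 + a * x₁ + b)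
      obtain ⟨y₀, e2₀⟩ := sqrt (x₂ ^ 3 + a * x₂ + b)
      have huv : ((x₁ - x₂) ^ 2 * x₃ - ((x₁ + x₂) * (x₁ * x₂ + a) + 2 * b) - 2 * y₁ * y₀)
          * ((x₁ - x₂) ^ 2 * x₃ - ((x₁ + x₂) * (x₁ * x₂ + a) + 2 * b) + 2 * y₁ * y₀) = 0 := by
        linear_combination (x₁ - x₂) ^ 2 * hS - 4 * y₀ ^ 2 * e1
          - 4 * (x₁ ^ 3 + a * x₁ + b) * e2₀
      obtain ⟨y₂, e2, hu⟩ : ∃ y₂ : AlgebraicClosure K, y₂ ^ 2 = x₂ ^ 3 + a * x₂ + b ∧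
          (x₁ - x₂) ^ 2 * x₃ = ((x₁ + x₂) * (x₁ * x₂ + a) + 2 * b) - 2 * y₁ * y₂ := by
        rcases mul_eq_zero.mp huv with h | h
        · exact ⟨-y₀, by linear_combination e2₀, by linear_combination h⟩
        · exact ⟨y₀, e2₀, by linear_combination h⟩
      have h₁ := nonsing x₁ y₁ e1
      have h₂ := nonsing x₂ y₂ e2
      have haddx : W.addX x₁ x₂ (W.slope x₁ x₂ y₁ y₂) = x₃ := by
        rw [Affine.addX, Affine.slope_of_X_ne hx, ha1, ha2]
        have hxne : x₁ - x₂ ≠ 0 := sub_ne_zero.mpr hx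
        field_simp
        linear_combination e1 + e2 - hu
      subst haddx
      exact ⟨y₁, y₂, _, h₁, h₂, Affine.nonsingular_negAdd h₁ h₂ fun h => hx h.1, by
        rw [Affine.Point.add_of_X_ne' hx]; exact neg_add_cancel _⟩
  · -- backward direction
    rintro ⟨y₁, y₂, y₃, h₁, h₂, h₃, hsum⟩
    have e1 : y₁ ^ 2 = x₁ ^ 3 + a * x₁ + b := (heq _ _).mp h₁.1
    have e2 : y₂ ^ 2 = x₂ ^ 3 + a * x₂ + b := (heq _ _).mp h₂.1
    by_cases hc : x₁ = x₂ ∧ y₁ = W.negY x₂ y₂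
    · exfalso
      rw [Affine.Point.add_of_Y_eq hc.1 hc.2, zero_add] at hsum
      exact Affine.Point.some_ne_zero h₃ hsum
    · have hxy : x₁ = x₂ → y₁ ≠ W.negY x₂ y₂ := fun hx hy => hc ⟨hx, hy⟩
      by_cases hx : x₁ = x₂
      · subst hx
        have hy := hxy rfl
        have hy' : y₁ ≠ -y₂ := by rwa [hneg] at hy
        have hyy : y₂ = y₁ := by
          rcases mul_eq_zero.mp (show (y₁ - y₂) * (y₁ + y₂) = 0 by
            linear_combination e1 - e2) with h | h
          · exact (sub_eq_zero.mp h).symm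
          · exact absurd (by linear_combination h) hy'
        subst hyy
        have hy1 : y₂ ≠ 0 := fun h => hy' (by rw [h]; ring)
        rw [Affine.Point.add_self_of_Y_ne' hy] at hsum
        have h3eq := (neg_add_eq_zero.mp hsum).symm
        have hx3 : x₃ = W.addX x₁ x₁ (W.slope x₁ x₁ y₂ y₂) :=
          (Affine.Point.some.inj h3eq).left
        have hL : W.slope x₁ x₁ y₂ y₂ = (3 * x₁ ^ 2 + a) / (2 * y₂) := by
          rw [Affine.slope_of_Y_ne rfl hy, hneg, ha1, ha2, ha4]
          congr 1 <;> ring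
        rw [Affine.addX, hL, ha1, ha2] at hx3
        have h2y : (2 * y₂) ≠ 0 := mul_ne_zero h2 hy1
        have e : 4 * y₂ ^ 2 * x₃ = (3 * x₁ ^ 2 + a) ^ 2 - 8 * x₁ * y₂ ^ 2 := by
          field_simp at hx3
          linear_combination hx3
        have key : ((x₁ - x₁) ^ 2 * x₃ ^ 2
            - 2 * ((x₁ + x₁) * (x₁ * x₁ + a) + 2 * b) * x₃
            + (x₁ * x₁ - a) ^ 2 - 4 * b * (x₁ + x₁)) * (4 * y₂ ^ 2) = 0 := by
          linear_combination (-4 * x₁ ^ 3 - 4 * a * x₁ - 4 * b) * e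
            + (36 * x₁ ^ 4 + 24 * a * x₁ ^ 2 + 4 * a ^ 2) * e1
        have h4y : (4 : AlgebraicClosure K) * y₂ ^ 2 ≠ 0 := by
          refine mul_ne_zero ?_ (pow_ne_zero 2 hy1)
          have : (4 : AlgebraicClosure K) = 2 ^ 2 := by norm_num
          rw [this]; exact pow_ne_zero 2 h2
        exact (mul_eq_zero.mp key).resolve_right h4y
      · rw [Affine.Point.add_of_X_ne' hx] at hsum
        have h3eq := (neg_add_eq_zero.mp hsum).symm
        have hx3 : x₃ = W.addX x₁ x₂ (W.slope x₁ x₂ y₁ y₂) :=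
          (Affine.Point.some.inj h3eq).left
        rw [Affine.addX, Affine.slope_of_X_ne hx, ha1, ha2] at hx3
        have hxne : x₁ - x₂ ≠ 0 := sub_ne_zero.mpr hx
        have e : (x₁ - x₂) ^ 2 * x₃ = (y₁ - y₂) ^ 2 - (x₁ + x₂) * (x₁ - x₂) ^ 2 := by
          field_simp at hx3
          linear_combination hx3
        have hu : (x₁ - x₂) ^ 2 * x₃ = ((x₁ + x₂) * (x₁ * x₂ + a) + 2 * b) - 2 * y₁ * y₂ := by
          linear_combination e + e1 + e2
        have key : ((x₁ - x₂) ^ 2 * x₃ ^ 2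
            - 2 * ((x₁ + x₂) * (x₁ * x₂ + a) + 2 * b) * x₃
            + (x₁ * x₂ - a) ^ 2 - 4 * b * (x₁ + x₂)) * ((x₁ - x₂) ^ 2) = 0 := by
          linear_combination ((x₁ - x₂) ^ 2 * x₃ - 2 * y₁ * y₂ - x₁ ^ 2 * x₂ - x₁ * x₂ ^ 2
              - a * x₁ - a * x₂ - 2 * b) * hu
            + 4 * y₂ ^ 2 * e1 + (4 * x₁ ^ 3 + 4 * a * x₁ + 4 * b) * e2
        exact (mul_eq_zero.mp key).resolve_right (pow_ne_zero 2 hxne)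
end

section
/- Let E be an elliptic curve over a finite field F_q and let Sₘ denote its m-th summation polynomial. If x₁, …, x_t ∈ F_q and R = (R_X, R_Y) is an affine point of E(F_q) with S_{t+1}(x₁, …, x_t, R_X) = 0, then there exist y₁, …, y_t in the quadratic extension F_{q²} such that each (xᵢ, yᵢ) lies on E and (x₁,y₁) + (x₂,y₂) + ⋯ + (x_t,y_t) + R = ∞ in E over the algebraic closure. -/
open WeierstrassCurve MvPolynomial

private lemma fq2_of_equation {F : Type*} [Field F] [Fintype F] (W : WeierstrassCurve.Affine F)
    (a : F) (z : AlgebraicClosure F)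
    (hz : (W.baseChange (AlgebraicClosure F)).toAffine.Equation
      (algebraMap F (AlgebraicClosure F) a) z) :
    z ^ (Fintype.card F) ^ 2 = z := by
  set φ := algebraMap F (AlgebraicClosure F) with hφ
  haveI : CharP F (ringChar F) := ringChar.charP F
  obtain ⟨n, hp, hq⟩ := FiniteField.card F (ringChar F)
  haveI : Fact (ringChar F).Prime := ⟨hp⟩
  haveI : CharP (AlgebraicClosure F) (ringChar F) :=
    charP_of_injective_algebraMap φ.injective (ringChar F)
  set ψ : AlgebraicClosure F →+* AlgebraicClosure F :=
    iterateFrobenius (AlgebraicClosure F) (ringChar F) n with hψ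
  have hfr : ∀ w : AlgebraicClosure F, ψ w = w ^ Fintype.card F := fun w => by
    rw [hψ, iterateFrobenius_def, hq]
  have hfix : ∀ b : F, ψ (φ b) = φ b := fun b => by
    rw [hfr, ← map_pow, FiniteField.pow_card]
  set c : AlgebraicClosure F := φ (W.a₁ * a + W.a₃) with hc
  set d : AlgebraicClosure F := φ (-(a ^ 3 + W.a₂ * a ^ 2 + W.a₄ * a + W.a₆)) with hd
  have hquad : z ^ 2 + c * z + d = 0 := by
    rw [Affine.equation_iff] at hz
    simp only [WeierstrassCurve.baseChange, map_a₁, map_a₂, map_a₃, map_a₄, map_a₆] at hz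
    simp only [hc, hd, map_neg, map_add, map_mul, map_pow]
    linear_combination hz
  have hcc : ψ c = c := hfix _
  have hdd : ψ d = d := hfix _
  have hψz : (ψ z) ^ 2 + c * (ψ z) + d = 0 := by
    have h0 := congrArg ψ hquad
    rw [map_add, map_add, map_mul, map_pow, hcc, hdd, map_zero] at h0
    exact h0
  have hcases : (ψ z - z) * (ψ z + z + c) = 0 := by linear_combination hψz - hquad
  have hq2 : z ^ (Fintype.card F) ^ 2 = ψ (ψ z) := by rw [hfr, hfr, ← pow_mul, sq]
  rcases mul_eq_zero.mp hcases with h | h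
  · have h' : ψ z = z := sub_eq_zero.mp h
    rw [hq2, h', h']
  · have h' : ψ z = -z - c := by linear_combination h
    rw [hq2, h', map_sub, map_neg, h', hcc]
    ring

private lemma some_congr'' {K : Type*} [Field K] {W : WeierstrassCurve.Affine K}
    {x₁ x₂ y₁ y₂ : K} (hx : x₁ = x₂) (hy : y₁ = y₂)
    (h₁ : W.Nonsingular x₁ y₁) (h₂ : W.Nonsingular x₂ y₂) :
    Affine.Point.some _ _ h₁ = Affine.Point.some _ _ h₂ := by subst hx; subst hy; rfl


open Classical in
/-- over a finite field `F_q`, if `S_{t+1}(x₁,…,x_t,R_X) = 0` for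
`x₁,…,x_t ∈ F_q` and an affine point `R = (R_X,R_Y) ∈ E(F_q)`, then there exist
`y₁,…,y_t` lying in the quadratic extension `F_{q²}` (inside the algebraic closure,
i.e. `yᵢ^(q²) = yᵢ`) such that each `(xᵢ,yᵢ)` is on `E` and
`(x₁,y₁) + ⋯ + (x_t,y_t) + R = ∞`.  Here the summation polynomials `Sₘ` are
characterized by: `Sₘ(x₁,…,xₘ) = 0` iff there are `yᵢ` in the algebraic closure with
`(xᵢ,yᵢ) ∈ E` and `∑ᵢ (xᵢ,yᵢ) = ∞`. -/
theorem stmt4 {F : Type*} [Field F] [Fintype F] (W : WeierstrassCurve.Affine F)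
    (S : ∀ m : ℕ, MvPolynomial (Fin m) F)
    (hS : ∀ (m : ℕ) (x : Fin m → AlgebraicClosure F),
      eval x ((S m).map (algebraMap F (AlgebraicClosure F))) = 0 ↔
        ∃ (y : Fin m → AlgebraicClosure F)
          (h : ∀ i, (W.baseChange (AlgebraicClosure F)).toAffine.Nonsingular (x i) (y i)),
          ∑ i, Affine.Point.some _ _ (h i) = 0)
    (t : ℕ) (x : Fin t → F) (RX RY : F) (hR : W.Nonsingular RX RY)
    (hzero : eval
        (Fin.snoc (fun i => algebraMap F (AlgebraicClosure F) (x i))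
          (algebraMap F (AlgebraicClosure F) RX))
        ((S (t + 1)).map (algebraMap F (AlgebraicClosure F))) = 0) :
    ∃ y : Fin t → AlgebraicClosure F,
      (∀ i, (y i) ^ (Fintype.card F) ^ 2 = y i) ∧
      ∃ (h : ∀ i, (W.baseChange (AlgebraicClosure F)).toAffine.Nonsingular
          (algebraMap F (AlgebraicClosure F) (x i)) (y i))
        (hR' : (W.baseChange (AlgebraicClosure F)).toAffine.Nonsingular
          (algebraMap F (AlgebraicClosure F) RX) (algebraMap F (AlgebraicClosure F) RY)),
        (∑ i, Affine.Point.some _ _ (h i)) + Affine.Point.some _ _ hR' = 0 := by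
  set φ := algebraMap F (AlgebraicClosure F) with hφ
  obtain ⟨y', h', hsum⟩ := (hS (t + 1) _).mp hzero
  have hR' : (W.baseChange (AlgebraicClosure F)).toAffine.Nonsingular (φ RX) (φ RY) :=
    (W.map_nonsingular φ.injective RX RY).mpr hR
  have hxc : ∀ i : Fin t,
      (Fin.snoc (fun i => φ (x i)) (φ RX) : Fin (t + 1) → AlgebraicClosure F) i.castSucc
        = φ (x i) := fun i => Fin.snoc_castSucc _ _ _
  have hxl : (Fin.snoc (fun i => φ (x i)) (φ RX) : Fin (t + 1) → AlgebraicClosure F)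
      (Fin.last t) = φ RX := Fin.snoc_last _ _
  have hP : ∀ i : Fin t, (W.baseChange (AlgebraicClosure F)).toAffine.Nonsingular
      (φ (x i)) (y' i.castSucc) := fun i => hxc i ▸ h' i.castSucc
  have hQ : (W.baseChange (AlgebraicClosure F)).toAffine.Nonsingular
      (φ RX) (y' (Fin.last t)) := hxl ▸ h' (Fin.last t)
  have hsum' : (∑ i : Fin t, Affine.Point.some _ _ (hP i)) + Affine.Point.some _ _ hQ = 0 := by
    rw [← hsum, Fin.sum_univ_castSucc]
    exact congrArg₂ (· + ·)
      (Finset.sum_congr rfl fun i _ => some_congr'' (hxc i).symm rfl _ _)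
      (some_congr'' hxl.symm rfl _ _)
  rcases Affine.Y_eq_of_X_eq hQ.1 hR'.1 rfl with heq | heq
  · refine ⟨fun i => y' i.castSucc,
      fun i => fq2_of_equation W (x i) _ (hP i).1, hP, hR', ?_⟩
    rw [← hsum']
    exact congrArg₂ (· + ·) rfl (some_congr'' rfl heq.symm _ _)
  · refine ⟨fun i => (W.baseChange (AlgebraicClosure F)).toAffine.negY
        (φ (x i)) (y' i.castSucc),
      fun i => fq2_of_equation W (x i) _ (((Affine.nonsingular_neg ..).mpr (hP i))).1,
      fun i => ((Affine.nonsingular_neg ..).mpr (hP i)), hR', ?_⟩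
    have h1 : (∑ i : Fin t, Affine.Point.some _ _ (((Affine.nonsingular_neg ..).mpr (hP i))))
        = -∑ i : Fin t, Affine.Point.some _ _ (hP i) := by
      rw [← Finset.sum_neg_distrib]
      exact Finset.sum_congr rfl fun i _ => (Affine.Point.neg_some (hP i)).symm
    have h2 : Affine.Point.some _ _ hR' = -Affine.Point.some _ _ hQ := by
      rw [Affine.Point.neg_some]
      have hy : (W.baseChange (AlgebraicClosure F)).toAffine.negY (φ RX) (y' (Fin.last t))
          = φ RY := by rw [heq, Affine.negY_negY]
      exact some_congr'' rfl hy.symm _ _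
    rw [h1, h2, ← neg_add, hsum', neg_zero]
end

section
/- Let E be an elliptic curve over F_q, let R ∈ E(F_q) be an affine point, and suppose points (x₁,y₁), …, (x_t,y_t) ∈ E(F_{q²}) satisfy (x₁,y₁) + ⋯ + (x_t,y_t) + R = ∞, where x₁,…,x_t ∈ F_q, y₁,…,y_s ∈ F_{q²} \ F_q and y_{s+1},…,y_t ∈ F_q with s > 0. If the partial sum G = (x_{s+1},y_{s+1}) + ⋯ + (x_t,y_t) satisfies G + R ≠ ∞, then H = (x₁,y₁) + ⋯ + (x_s,y_s) is a point of E(F_q) of order exactly 2; in particular s ≥ 2. -/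
open WeierstrassCurve

open Polynomial in
lemma stmt5_aux_fixed_iff {Fq F2 : Type*} [Field Fq] [Fintype Fq] [Field F2] [Fintype F2]
    [Algebra Fq F2] (a : F2) :
    a ^ Fintype.card Fq = a ↔ a ∈ Set.range (algebraMap Fq F2) := by
  classical
  constructor
  · intro ha
    have hq : 1 < Fintype.card Fq := Fintype.one_lt_card
    by_contra hmem
    have hinj : Function.Injective (algebraMap Fq F2) := (algebraMap Fq F2).injective
    set q := Fintype.card Fq with hqdef
    set S : Finset F2 := Finset.univ.image (algebraMap Fq F2) with hS
    have hcard : S.card = q := by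
      rw [hS, Finset.card_image_of_injective _ hinj, Finset.card_univ]
    have hf0 : (X ^ q - X : F2[X]) ≠ 0 := FiniteField.X_pow_card_sub_X_ne_zero F2 hq
    have hsub : insert a S ⊆ (X ^ q - X : F2[X]).roots.toFinset := by
      intro b hb
      rw [Multiset.mem_toFinset, mem_roots hf0]
      have hb' : b ^ q = b := by
        rcases Finset.mem_insert.mp hb with rfl | hb
        · exact ha
        · obtain ⟨c, _, rfl⟩ := Finset.mem_image.mp hb
          rw [← map_pow, FiniteField.pow_card]
      simp [IsRoot, sub_eq_zero, hb']
    have haS : a ∉ S := by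
      intro hx
      obtain ⟨c, _, rfl⟩ := Finset.mem_image.mp hx
      exact hmem ⟨c, rfl⟩
    have hle : (insert a S).card ≤ q :=
      calc (insert a S).card ≤ (X ^ q - X : F2[X]).roots.toFinset.card :=
            Finset.card_le_card hsub
        _ ≤ Multiset.card (X ^ q - X : F2[X]).roots := Multiset.toFinset_card_le _
        _ ≤ (X ^ q - X : F2[X]).natDegree := (X ^ q - X : F2[X]).card_roots'
        _ = q := FiniteField.X_pow_card_sub_X_natDegree_eq F2 hq
    rw [Finset.card_insert_of_notMem haS, hcard] at hle
    omega
  · rintro ⟨b, rfl⟩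
    rw [← map_pow, FiniteField.pow_card]

open Classical in
/-- let `E` be an elliptic curve over `F_q`, `R ∈ E(F_q)` affine, and
`(x₁,y₁), …, (x_t,y_t) ∈ E(F_{q²})` with all `xᵢ ∈ F_q`, the first `s > 0` of the `yᵢ`
in `F_{q²} \ F_q` and the rest in `F_q`, such that `(x₁,y₁) + ⋯ + (x_t,y_t) + R = ∞`.
If `G = (x_{s+1},y_{s+1}) + ⋯ + (x_t,y_t)` satisfies `G + R ≠ ∞`, then
`H = (x₁,y₁) + ⋯ + (x_s,y_s)` is a point of `E(F_q)` of order exactly `2`;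
in particular `s ≥ 2`. -/
theorem stmt5 {Fq F2 : Type*} [Field Fq] [Fintype Fq] [Field F2] [Fintype F2] [Algebra Fq F2]
    (hdim : Module.finrank Fq F2 = 2)
    (W : WeierstrassCurve.Affine Fq)
    (t s : ℕ) (hs : 0 < s) (hst : s ≤ t)
    (x : Fin t → Fq) (y : Fin t → F2)
    (h : ∀ i, (W.baseChange F2).toAffine.Nonsingular (algebraMap Fq F2 (x i)) (y i))
    (hy₁ : ∀ i : Fin t, (i : ℕ) < s → y i ∉ Set.range (algebraMap Fq F2))
    (hy₂ : ∀ i : Fin t, s ≤ (i : ℕ) → y i ∈ Set.range (algebraMap Fq F2))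
    (Rx Ry : Fq) (hR : W.Nonsingular Rx Ry)
    (hR2 : (W.baseChange F2).toAffine.Nonsingular (algebraMap Fq F2 Rx) (algebraMap Fq F2 Ry))
    (hsum : (∑ i, Affine.Point.some _ _ (h i)) + Affine.Point.some _ _ hR2 = 0)
    (hG : (∑ i ∈ Finset.univ.filter fun i : Fin t => s ≤ (i : ℕ), Affine.Point.some _ _ (h i))
        + Affine.Point.some _ _ hR2 ≠ 0) :
    (∃ (xH yH : Fq)
        (hH : (W.baseChange F2).toAffine.Nonsingular (algebraMap Fq F2 xH) (algebraMap Fq F2 yH)),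
        (∑ i ∈ Finset.univ.filter fun i : Fin t => (i : ℕ) < s, Affine.Point.some _ _ (h i))
          = Affine.Point.some _ _ hH) ∧
      addOrderOf (∑ i ∈ Finset.univ.filter fun i : Fin t => (i : ℕ) < s,
        Affine.Point.some _ _ (h i)) = 2 ∧
      2 ≤ s := by
  classical
  -- the Frobenius automorphism
  obtain ⟨p, _⟩ := CharP.exists Fq
  haveI hp : Fact p.Prime := ⟨CharP.char_is_prime Fq p⟩
  haveI : CharP F2 p := charP_of_injective_algebraMap' Fq p
  haveI : ExpChar F2 p := .prime hp.out
  obtain ⟨n, -, hn⟩ := FiniteField.card Fq p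
  let φ : F2 →ₐ[Fq] F2 :=
    { iterateFrobenius F2 p n with
      commutes' := fun r => by
        show iterateFrobenius F2 p n _ = _
        rw [iterateFrobenius_def, ← map_pow, ← hn, FiniteField.pow_card] }
  have hφ : ∀ a : F2, φ a = a ^ Fintype.card Fq := fun a => by
    show iterateFrobenius F2 p n a = _
    rw [iterateFrobenius_def, hn]
  have hfix : ∀ a : F2, φ a = a ↔ a ∈ Set.range (algebraMap Fq F2) := fun a => by
    rw [hφ]; exact stmt5_aux_fixed_iff a
  -- the induced map on points
  let Φ : Affine.Point (W.baseChange F2).toAffine →+ Affine.Point (W.baseChange F2).toAffine := Affine.Point.map (W' := W) φ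
  have some_congr : ∀ {x₁ y₁ x₂ y₂ : F2} (h₁ : (W.baseChange F2).toAffine.Nonsingular x₁ y₁)
      (h₂ : (W.baseChange F2).toAffine.Nonsingular x₂ y₂), x₁ = x₂ → y₁ = y₂ →
      Affine.Point.some _ _ h₁ = Affine.Point.some _ _ h₂ := by
    rintro x₁ y₁ x₂ y₂ h₁ h₂ rfl rfl; rfl
  -- action on the individual points
  have hyneg : ∀ i : Fin t, (i : ℕ) < s →
      φ (y i) = (W.baseChange F2).toAffine.negY (algebraMap Fq F2 (x i)) (y i) := by
    intro i hi
    have heq2 : (W.baseChange F2).toAffine.Equation (algebraMap Fq F2 (x i)) (φ (y i)) := by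
      have := ((W.baseChange_nonsingular φ.injective (algebraMap Fq F2 (x i)) (y i)).mpr (h i)).1
      rwa [φ.commutes] at this
    rcases Affine.Y_eq_of_X_eq heq2 (h i).1 rfl with heq | heq
    · exact absurd ((hfix (y i)).mp heq) (hy₁ i hi)
    · exact heq
  have hΦP : ∀ i : Fin t, (i : ℕ) < s →
      Φ (Affine.Point.some _ _ (h i)) = -Affine.Point.some _ _ (h i) := by
    intro i hi
    show Affine.Point.map (W' := W) φ (Affine.Point.some _ _ (h i)) = _
    rw [Affine.Point.map_some, Affine.Point.neg_some]
    exact some_congr _ _ (φ.commutes _) (hyneg i hi)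
  have hΦQ : ∀ i : Fin t, s ≤ (i : ℕ) →
      Φ (Affine.Point.some _ _ (h i)) = Affine.Point.some _ _ (h i) := by
    intro i hi
    show Affine.Point.map (W' := W) φ (Affine.Point.some _ _ (h i)) = _
    rw [Affine.Point.map_some]
    exact some_congr _ _ (φ.commutes _) ((hfix (y i)).mpr (hy₂ i hi))
  have hΦR : Φ (Affine.Point.some _ _ hR2) = Affine.Point.some _ _ hR2 := by
    show Affine.Point.map (W' := W) φ (Affine.Point.some _ _ hR2) = _
    rw [Affine.Point.map_some]
    exact some_congr _ _ (φ.commutes _) (φ.commutes _)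
  -- split the sum
  set H := ∑ i ∈ Finset.univ.filter fun i : Fin t => (i : ℕ) < s, Affine.Point.some _ _ (h i)
    with hHdef
  set G := ∑ i ∈ Finset.univ.filter fun i : Fin t => s ≤ (i : ℕ), Affine.Point.some _ _ (h i)
    with hGdef
  have hsplit : (∑ i, Affine.Point.some _ _ (h i)) = H + G := by
    rw [hHdef, hGdef, ← Finset.sum_filter_add_sum_filter_not Finset.univ
      (fun i : Fin t => (i : ℕ) < s)]
    congr 1
    apply Finset.sum_congr _ fun _ _ => rfl
    ext i
    simp [not_lt]
  have hHval : H = -(G + Affine.Point.some _ _ hR2) := by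
    rw [eq_neg_iff_add_eq_zero, ← add_assoc, ← hsplit]
    exact hsum
  have hH0 : H ≠ 0 := by
    rw [hHval]
    simpa only [ne_eq, neg_eq_zero] using hG
  have hΦH : Φ H = -H := by
    rw [hHdef, map_sum, ← Finset.sum_neg_distrib]
    exact Finset.sum_congr rfl fun i hi => hΦP i (Finset.mem_filter.mp hi).2
  have hΦG : Φ G = G := by
    rw [hGdef, map_sum]
    exact Finset.sum_congr rfl fun i hi => hΦQ i (Finset.mem_filter.mp hi).2
  have hΦHfix : Φ H = H := by
    rw [hHval, map_neg, map_add, hΦG, hΦR]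
  have hHneg : -H = H := hΦH.symm.trans hΦHfix
  have h2H : 2 • H = 0 := by
    rw [two_smul]
    nth_rewrite 1 [← hHneg]
    exact neg_add_cancel H
  haveI : Fact (Nat.Prime 2) := ⟨Nat.prime_two⟩
  have hord : addOrderOf H = 2 := addOrderOf_eq_prime h2H hH0
  -- H is an affine point with coordinates in Fq
  obtain ⟨xH', yH', hH', hHeq⟩ :
      ∃ (xH' yH' : F2) (hH' : (W.baseChange F2).toAffine.Nonsingular xH' yH'),
        H = Affine.Point.some _ _ hH' := by
    rcases H with _ | @⟨xH', yH', hH'⟩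
    · exact absurd rfl hH0
    · exact ⟨xH', yH', hH', rfl⟩
  have hfixH : φ xH' = xH' ∧ φ yH' = yH' := by
    have := hΦHfix
    rw [hHeq] at this
    rw [show Φ (Affine.Point.some _ _ hH') = Affine.Point.some _ _
      ((W.baseChange_nonsingular φ.injective xH' yH').mpr hH') from rfl] at this
    have h1 := Affine.Point.some.inj this
    exact ⟨h1.1, h1.2⟩
  obtain ⟨xH, hxH⟩ := (hfix xH').mp hfixH.1
  obtain ⟨yH, hyH⟩ := (hfix yH').mp hfixH.2
  -- s ≥ 2
  have hs2 : 2 ≤ s := by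
    by_contra hcon
    have hs1 : s = 1 := by omega
    have i0 : Fin t := ⟨0, lt_of_lt_of_le hs hst⟩
    have hfilter : (Finset.univ.filter fun i : Fin t => (i : ℕ) < s) = {⟨0, lt_of_lt_of_le hs hst⟩} := by
      ext i
      simp only [Finset.mem_filter, Finset.mem_univ, true_and, Finset.mem_singleton, hs1]
      constructor
      · intro hi; exact Fin.ext (Nat.lt_one_iff.mp hi)
      · rintro rfl; exact Nat.zero_lt_one
    have hHsingle : H = Affine.Point.some _ _ (h ⟨0, lt_of_lt_of_le hs hst⟩) := by
      rw [hHdef, hfilter, Finset.sum_singleton]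
    have hneg := hHneg
    rw [hHsingle, Affine.Point.neg_some] at hneg
    have h1 := Affine.Point.some.inj hneg
    have : φ (y ⟨0, lt_of_lt_of_le hs hst⟩) = y ⟨0, lt_of_lt_of_le hs hst⟩ := by
      rw [hyneg ⟨0, lt_of_lt_of_le hs hst⟩ hs, h1.2]
    exact absurd ((hfix _).mp this) (hy₁ _ hs)
  refine ⟨⟨xH, yH, ?_, ?_⟩, hord, hs2⟩
  · rw [hxH, hyH]; exact hH'
  · rw [hHeq]
    exact (some_congr _ _ hxH.symm hyH.symm)
end

section
/- Conversely, every solution of the chain system S₃(u₁,x₁,x₂) = 0, S₃(u_i,u_{i+1},x_{i+2}) = 0 for 1 ≤ i ≤ t−3, S₃(u_{t−2},x_t,R_X) = 0 (with x₁,…,x_t, u₁,…,u_{t−2} in the algebraic closure) yields a solution of the single equation S_{t+1}(x₁,…,x_t,R_X) = 0, where S_{t+1} is the (t+1)-th summation polynomial. -/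
open WeierstrassCurve MvPolynomial

open Classical in
/-- every solution in the algebraic closure of the chain system
`S₃(u₁,x₁,x₂) = 0`, `S₃(u_i,u_{i+1},x_{i+2}) = 0` for `1 ≤ i ≤ t−3`,
`S₃(u_{t−2},x_t,R_X) = 0` yields a solution of `S_{t+1}(x₁,…,x_t,R_X) = 0`, where the
summation polynomials `Sₘ` of an elliptic curve `E` over `K` are characterized by:
`Sₘ(x₁,…,xₘ) = 0` iff there are points of `E` over the algebraic closure with these
`X`-coordinates summing to `∞`. -/
theorem stmt7 {K : Type*} [Field K] (W : WeierstrassCurve.Affine K)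
    (S : ∀ m : ℕ, MvPolynomial (Fin m) K)
    (hS : ∀ (m : ℕ) (x : Fin m → AlgebraicClosure K),
      eval x ((S m).map (algebraMap K (AlgebraicClosure K))) = 0 ↔
        ∃ (y : Fin m → AlgebraicClosure K)
          (h : ∀ i, (W.baseChange (AlgebraicClosure K)).toAffine.Nonsingular (x i) (y i)),
          ∑ i, Affine.Point.some (x i) (y i) (h i) = 0)
    (t : ℕ) (ht : 3 ≤ t)
    (x u : ℕ → AlgebraicClosure K) (RX : AlgebraicClosure K)
    (h1 : eval ![u 1, x 1, x 2] ((S 3).map (algebraMap K (AlgebraicClosure K))) = 0)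
    (h2 : ∀ i, 1 ≤ i → i ≤ t - 3 →
      eval ![u i, u (i + 1), x (i + 2)] ((S 3).map (algebraMap K (AlgebraicClosure K))) = 0)
    (h3 : eval ![u (t - 2), x t, RX] ((S 3).map (algebraMap K (AlgebraicClosure K))) = 0) :
    eval (fun i : Fin (t + 1) => if (i : ℕ) < t then x ((i : ℕ) + 1) else RX)
      ((S (t + 1)).map (algebraMap K (AlgebraicClosure K))) = 0 := by
  -- helper: equality of points from equality of coordinates
  have pt_eq : ∀ {x₁ x₂ y₁ y₂ : AlgebraicClosure K} (h₁ : (W.baseChange (AlgebraicClosure K)).toAffine.Nonsingular x₁ y₁) (h₂ : (W.baseChange (AlgebraicClosure K)).toAffine.Nonsingular x₂ y₂),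
      x₁ = x₂ → y₁ = y₂ → Affine.Point.some _ _ h₁ = Affine.Point.some _ _ h₂ := by
    rintro x₁ x₂ y₁ y₂ h₁ h₂ rfl rfl; rfl
  -- helper: casting the x-coordinate
  have castPt : ∀ {c c' yv : AlgebraicClosure K}, c = c' → ∀ (hh : (W.baseChange (AlgebraicClosure K)).toAffine.Nonsingular c yv),
      ∃ h' : (W.baseChange (AlgebraicClosure K)).toAffine.Nonsingular c' yv, Affine.Point.some _ _ hh = Affine.Point.some _ _ h' := by
    rintro c c' yv rfl hh; exact ⟨hh, rfl⟩
  -- helper: two points with the same x-coordinate agree up to negation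
  have ysame : ∀ {c a b : AlgebraicClosure K} (h₁ : (W.baseChange (AlgebraicClosure K)).toAffine.Nonsingular c a) (h₂ : (W.baseChange (AlgebraicClosure K)).toAffine.Nonsingular c b),
      Affine.Point.some _ _ h₁ = Affine.Point.some _ _ h₂ ∨
        Affine.Point.some _ _ h₁ = -Affine.Point.some _ _ h₂ := by
    intro c a b h₁ h₂
    rcases (W.baseChange (AlgebraicClosure K)).toAffine.Y_eq_of_X_eq h₁.1 h₂.1 rfl with rfl | rfl
    · exact Or.inl rfl
    · right; rw [Affine.Point.neg_some]
  -- the chain claim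
  have key : ∀ n, 1 ≤ n → n ≤ t - 2 → ∃ (P : ℕ → (W.baseChange (AlgebraicClosure K)).toAffine.Point) (Q : (W.baseChange (AlgebraicClosure K)).toAffine.Point),
      (∀ j, j ≤ n → ∃ yv, ∃ h' : (W.baseChange (AlgebraicClosure K)).toAffine.Nonsingular (x (j + 1)) yv,
        P j = Affine.Point.some _ _ h') ∧
      (∃ yv, ∃ h' : (W.baseChange (AlgebraicClosure K)).toAffine.Nonsingular (u n) yv, Q = Affine.Point.some _ _ h') ∧
      (∑ j ∈ Finset.range (n + 1), P j) + Q = 0 := by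
    intro n
    induction n with
    | zero => omega
    | succ m ih =>
      intro _ hm
      by_cases hm0 : m = 0
      · -- base case n = 1
        subst hm0
        obtain ⟨y3, hn3, hs⟩ := (hS 3 _).mp h1
        rw [Fin.sum_univ_three] at hs
        obtain ⟨hq, e0⟩ := castPt (show (![u 1, x 1, x 2] : Fin 3 → AlgebraicClosure K) 0 = u 1 by simp) (hn3 0)
        obtain ⟨hp0, e1⟩ := castPt (show (![u 1, x 1, x 2] : Fin 3 → AlgebraicClosure K) 1 = x (0 + 1) by simp) (hn3 1)
        obtain ⟨hp1, e2⟩ := castPt (show (![u 1, x 1, x 2] : Fin 3 → AlgebraicClosure K) 2 = x (1 + 1) by simp) (hn3 2)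
        rw [e0, e1, e2] at hs
        refine ⟨fun j => if j = 0 then Affine.Point.some _ _ hp0 else Affine.Point.some _ _ hp1,
          Affine.Point.some _ _ hq, ?_, ⟨_, hq, rfl⟩, ?_⟩
        · intro j hj
          interval_cases j
          · exact ⟨_, hp0, by simp⟩
          · exact ⟨_, hp1, by simp⟩
        · rw [Finset.sum_range_succ, Finset.sum_range_one]
          simp only [if_pos rfl, if_neg (one_ne_zero)]
          calc Affine.Point.some _ _ hp0 + Affine.Point.some _ _ hp1 + Affine.Point.some _ _ hq
              = Affine.Point.some _ _ hq + Affine.Point.some _ _ hp0 + Affine.Point.some _ _ hp1 := by abel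
            _ = 0 := hs
      · -- inductive step
        obtain ⟨P, Q, hP, ⟨yq, hq, hQ⟩, hsum⟩ := ih (by omega) (by omega)
        rw [hQ] at hsum
        obtain ⟨y3, hn3, hs⟩ := (hS 3 _).mp (h2 m (by omega) (by omega))
        rw [Fin.sum_univ_three] at hs
        obtain ⟨ha, e0⟩ := castPt (show (![u m, u (m + 1), x (m + 2)] : Fin 3 → AlgebraicClosure K) 0 = u m by simp) (hn3 0)
        obtain ⟨hb, e1⟩ := castPt (show (![u m, u (m + 1), x (m + 2)] : Fin 3 → AlgebraicClosure K) 1 = u (m + 1) by simp) (hn3 1)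
        obtain ⟨hc, e2⟩ := castPt (show (![u m, u (m + 1), x (m + 2)] : Fin 3 → AlgebraicClosure K) 2 = x (m + 1 + 1) by
          simp) (hn3 2)
        rw [e0, e1, e2] at hs
        rcases ysame ha hq with hAQ | hAQ <;> rw [hAQ] at hs
        · -- some ha = some hq
          refine ⟨Function.update P (m + 1) (Affine.Point.some _ _ (((W.baseChange (AlgebraicClosure K)).toAffine.nonsingular_neg _ _).mpr hc)),
            Affine.Point.some _ _ (((W.baseChange (AlgebraicClosure K)).toAffine.nonsingular_neg _ _).mpr hb), ?_, ⟨_, _, rfl⟩, ?_⟩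
          · intro j hj
            rcases Nat.lt_or_ge j (m + 1) with hj' | hj'
            · rw [Function.update_of_ne (by omega)]
              exact hP j (by omega)
            · have : j = m + 1 := by omega
              subst this
              rw [Function.update_self]
              exact ⟨_, ((W.baseChange (AlgebraicClosure K)).toAffine.nonsingular_neg _ _).mpr hc, rfl⟩
          · rw [Finset.sum_range_succ, Function.update_self,
              Finset.sum_congr rfl (fun j hj => Function.update_of_ne
                (by simp only [Finset.mem_range] at hj; omega) _ P)]
            rw [← Affine.Point.neg_some hc, ← Affine.Point.neg_some hb]
            calc (∑ j ∈ Finset.range (m + 1), P j) + -Affine.Point.some _ _ hc +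
                  -Affine.Point.some _ _ hb
                = ((∑ j ∈ Finset.range (m + 1), P j) + Affine.Point.some _ _ hq) -
                  (Affine.Point.some _ _ hq + Affine.Point.some _ _ hb + Affine.Point.some _ _ hc) := by abel
              _ = 0 := by rw [hsum, hs, sub_zero]
        · -- some ha = -some hq
          refine ⟨Function.update P (m + 1) (Affine.Point.some _ _ hc),
            Affine.Point.some _ _ hb, ?_, ⟨_, _, rfl⟩, ?_⟩
          · intro j hj
            rcases Nat.lt_or_ge j (m + 1) with hj' | hj'
            · rw [Function.update_of_ne (by omega)]
              exact hP j (by omega)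
            · have : j = m + 1 := by omega
              subst this
              rw [Function.update_self]
              exact ⟨_, hc, rfl⟩
          · rw [Finset.sum_range_succ, Function.update_self,
              Finset.sum_congr rfl (fun j hj => Function.update_of_ne
                (by simp only [Finset.mem_range] at hj; omega) _ P)]
            calc (∑ j ∈ Finset.range (m + 1), P j) + Affine.Point.some _ _ hc +
                  Affine.Point.some _ _ hb
                = ((∑ j ∈ Finset.range (m + 1), P j) + Affine.Point.some _ _ hq) +
                  (-Affine.Point.some _ _ hq + Affine.Point.some _ _ hb + Affine.Point.some _ _ hc) := by abel
              _ = 0 := by rw [hsum, hs, add_zero]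
  -- instantiate at n = t - 2
  obtain ⟨P, Q, hP, ⟨yq, hq, hQ⟩, hsum⟩ := key (t - 2) (by omega) le_rfl
  rw [hQ, show t - 2 + 1 = t - 1 by omega] at hsum
  -- use the last equation
  obtain ⟨y3, hn3, hs⟩ := (hS 3 _).mp h3
  rw [Fin.sum_univ_three] at hs
  obtain ⟨ha, e0⟩ := castPt (show (![u (t - 2), x t, RX] : Fin 3 → AlgebraicClosure K) 0 = u (t - 2) by simp) (hn3 0)
  obtain ⟨hb, e1⟩ := castPt (show (![u (t - 2), x t, RX] : Fin 3 → AlgebraicClosure K) 1 = x t by simp) (hn3 1)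
  obtain ⟨hc, e2⟩ := castPt (show (![u (t - 2), x t, RX] : Fin 3 → AlgebraicClosure K) 2 = RX by simp) (hn3 2)
  rw [e0, e1, e2] at hs
  have hfin : ∃ (b' : AlgebraicClosure K) (hb' : (W.baseChange (AlgebraicClosure K)).toAffine.Nonsingular (x t) b') (c'' : AlgebraicClosure K)
      (hc'' : (W.baseChange (AlgebraicClosure K)).toAffine.Nonsingular RX c''),
      (∑ j ∈ Finset.range (t - 1), P j) + Affine.Point.some _ _ hb' + Affine.Point.some _ _ hc'' = 0 := by
    rcases ysame ha hq with hAQ | hAQ <;> rw [hAQ] at hs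
    · refine ⟨_, ((W.baseChange (AlgebraicClosure K)).toAffine.nonsingular_neg _ _).mpr hb, _, ((W.baseChange (AlgebraicClosure K)).toAffine.nonsingular_neg _ _).mpr hc, ?_⟩
      rw [← Affine.Point.neg_some hb, ← Affine.Point.neg_some hc]
      calc (∑ j ∈ Finset.range (t - 1), P j) + -Affine.Point.some _ _ hb + -Affine.Point.some _ _ hc
          = ((∑ j ∈ Finset.range (t - 1), P j) + Affine.Point.some _ _ hq) -
            (Affine.Point.some _ _ hq + Affine.Point.some _ _ hb + Affine.Point.some _ _ hc) := by abel
        _ = 0 := by rw [hsum, hs, sub_zero]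
    · refine ⟨_, hb, _, hc, ?_⟩
      calc (∑ j ∈ Finset.range (t - 1), P j) + Affine.Point.some _ _ hb + Affine.Point.some _ _ hc
          = ((∑ j ∈ Finset.range (t - 1), P j) + Affine.Point.some _ _ hq) +
            (-Affine.Point.some _ _ hq + Affine.Point.some _ _ hb + Affine.Point.some _ _ hc) := by abel
        _ = 0 := by rw [hsum, hs, add_zero]
  obtain ⟨b', hb', c'', hc'', hfin⟩ := hfin
  -- extract y-coordinates from P
  choose! yx hx hPx using hP
  -- assemble the solution of S_{t+1}
  refine (hS (t + 1) _).mpr ?_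
  have hyH : ∃ (y : Fin (t + 1) → AlgebraicClosure K)
      (h : ∀ i : Fin (t + 1),
        (W.baseChange (AlgebraicClosure K)).toAffine.Nonsingular (if (i : ℕ) < t then x ((i : ℕ) + 1) else RX) (y i)),
      ∀ i : Fin (t + 1), Affine.Point.some _ _ (h i) =
        (fun j : ℕ => if j < t - 1 then P j else if j = t - 1 then Affine.Point.some _ _ hb'
          else Affine.Point.some _ _ hc'') (i : ℕ) := by
    refine ⟨fun i => if (i : ℕ) < t - 1 then yx (i : ℕ)
      else if (i : ℕ) = t - 1 then b' else c'', fun i => ?_, fun i => ?_⟩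
    · have hit : (i : ℕ) < t + 1 := i.isLt
      simp only []
      by_cases hi1 : (i : ℕ) < t - 1
      · rw [if_pos hi1, if_pos (by omega)]
        exact hx (i : ℕ) (by omega)
      · by_cases hi2 : (i : ℕ) = t - 1
        · rw [if_neg hi1, if_pos hi2, if_pos (by omega), show (i : ℕ) + 1 = t by omega]
          exact hb'
        · rw [if_neg hi1, if_neg hi2, if_neg (by omega)]
          exact hc''
    · have hit : (i : ℕ) < t + 1 := i.isLt
      simp only []
      by_cases hi1 : (i : ℕ) < t - 1
      · conv_rhs => rw [if_pos hi1]
        rw [hPx (i : ℕ) (by omega)]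
        exact pt_eq _ _ (if_pos (by omega)) (by simp [hi1])
      · by_cases hi2 : (i : ℕ) = t - 1
        · conv_rhs => rw [if_neg hi1, if_pos hi2]
          exact pt_eq _ _ (by rw [if_pos (show (i : ℕ) < t by omega),
            show (i : ℕ) + 1 = t by omega]) (by simp [hi1, hi2])
        · conv_rhs => rw [if_neg hi1, if_neg hi2]
          exact pt_eq _ _ (if_neg (by omega)) (by simp [hi1, hi2])
  obtain ⟨y, H, hg⟩ := hyH
  refine ⟨y, H, ?_⟩
  calc (∑ i : Fin (t + 1), Affine.Point.some _ _ (H i))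
      = ∑ i : Fin (t + 1), (fun j : ℕ => if j < t - 1 then P j
          else if j = t - 1 then Affine.Point.some _ _ hb' else Affine.Point.some _ _ hc'') (i : ℕ) :=
        Finset.sum_congr rfl fun i _ => hg i
    _ = ∑ j ∈ Finset.range (t + 1), (fun j : ℕ => if j < t - 1 then P j
          else if j = t - 1 then Affine.Point.some _ _ hb' else Affine.Point.some _ _ hc'') j :=
        by exact Fin.sum_univ_eq_sum_range (fun j : ℕ => if j < t - 1 then P j
          else if j = t - 1 then Affine.Point.some _ _ hb' else Affine.Point.some _ _ hc'') (t + 1)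
    _ = 0 := by
        rw [show t + 1 = (t - 1) + 1 + 1 by omega, Finset.sum_range_succ, Finset.sum_range_succ,
          show t - 1 + 1 = t by omega]
        simp only [lt_irrefl, if_neg (lt_irrefl (t - 1)), if_pos rfl,
          if_neg (show ¬ t < t - 1 by omega), if_neg (show ¬ t = t - 1 by omega)]
        rw [Finset.sum_congr rfl (fun j hj => if_pos (Finset.mem_range.mp hj))]
        exact hfin
end

section
/- Let n ≥ 1 and fix a basis of F_{2ⁿ}/F₂. Every coordinate Boolean function of the map (x₁,x₂,x₃) ↦ x₁ · S₃(x₁,x₂,x₃), where S₃(x₁,x₂,x₃) = (x₁x₂+x₁x₃+x₂x₃)² + x₁x₂x₃ + B over F_{2ⁿ}, has total degree at most 3 as a Boolean polynomial (even though the naive bound deg x₁ + deg S₃ = 4 would suggest degree 4). -/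
open MvPolynomial


/-- Weil descent of `x₁ · S₃` over `F_{2ⁿ}`.  Every coordinate Boolean
function of the map `(x₁,x₂,x₃) ↦ x₁·S₃(x₁,x₂,x₃)`, with
`S₃ = (x₁x₂ + x₁x₃ + x₂x₃)² + x₁x₂x₃ + B`, is represented by a polynomial over `F₂` of
total degree at most `3` (not `4`) in the `3n` Boolean variables. -/
theorem stmt10 (n : ℕ) (hn : 1 ≤ n) (F : Type*) [Field F] [Algebra (ZMod 2) F]
    (b : Module.Basis (Fin n) (ZMod 2) F) (B : F) (j : Fin n) :
    ∃ P : MvPolynomial (Fin 3 × Fin n) (ZMod 2), P.totalDegree ≤ 3 ∧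
      ∀ c : Fin 3 × Fin n → ZMod 2,
        MvPolynomial.eval c P =
          b.repr
            ((∑ i, c (0, i) • b i) *
              (((∑ i, c (0, i) • b i) * (∑ i, c (1, i) • b i)
                  + (∑ i, c (0, i) • b i) * (∑ i, c (2, i) • b i)
                  + (∑ i, c (1, i) • b i) * (∑ i, c (2, i) • b i)) ^ 2
                + (∑ i, c (0, i) • b i) * (∑ i, c (1, i) • b i) * (∑ i, c (2, i) • b i)
                + B)) j := by
  classical
  haveI : CharP F 2 := charP_of_injective_algebraMap (algebraMap (ZMod 2) F).injective 2
  set φ : F →ₗ[ZMod 2] ZMod 2 := (Finsupp.lapply j) ∘ₗ b.repr.toLinearMap with hφ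
  have h2 : ∀ a : ZMod 2, a ^ 2 = a := by decide
  have sqsum : ∀ (a : Fin n → ZMod 2),
      (∑ i, a i • b i) ^ 2 = ∑ i, a i • (b i ^ 2) := by
    intro a
    rw [sum_pow_char]
    exact Finset.sum_congr rfl fun i _ => by rw [smul_pow, h2]
  have tri : ∀ (u v w : Fin n → F) (a a' a'' : Fin n → ZMod 2),
      (∑ i, a i • u i) * (∑ i, a' i • v i) * (∑ i, a'' i • w i)
      = ∑ i, ∑ i', ∑ i'', (a i * a' i' * a'' i'') • (u i * v i' * w i'') := by
    intro u v w a a' a''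
    rw [Finset.sum_mul_sum, Finset.sum_mul]
    refine Finset.sum_congr rfl fun i _ => ?_
    rw [Finset.sum_mul]
    refine Finset.sum_congr rfl fun i' _ => ?_
    rw [Finset.mul_sum]
    refine Finset.sum_congr rfl fun i'' _ => ?_
    rw [smul_mul_smul_comm, smul_mul_smul_comm]
  refine ⟨(∑ i, ∑ i', ∑ i'',
       ((X (0,i) * X (0,i') * X (1,i'')) * C (φ (b i * b i' ^ 2 * b i'' ^ 2))
      + (X (0,i) * X (0,i') * X (2,i'')) * C (φ (b i * b i' ^ 2 * b i'' ^ 2))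
      + (X (0,i) * X (1,i') * X (2,i'')) * C (φ (b i * b i' ^ 2 * b i'' ^ 2))
      + (X (0,i) * X (1,i') * X (2,i'')) * C (φ (b i ^ 2 * b i' * b i''))))
   + ∑ i, X ((0 : Fin 3), i) * C (φ (B * b i)), ?_, ?_⟩
  · have hX3 : ∀ (a : ZMod 2) (p q r : Fin 3 × Fin n),
        ((X p * X q * X r) * C a : MvPolynomial (Fin 3 × Fin n) (ZMod 2)).totalDegree ≤ 3 := by
      intro a p q r
      calc ((X p * X q * X r) * C a).totalDegree
          ≤ (X p * X q * X r : MvPolynomial (Fin 3 × Fin n) (ZMod 2)).totalDegree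
            + (C a : MvPolynomial (Fin 3 × Fin n) (ZMod 2)).totalDegree :=
            totalDegree_mul _ _
        _ ≤ ((X p * X q : MvPolynomial (Fin 3 × Fin n) (ZMod 2)).totalDegree
            + (X r : MvPolynomial (Fin 3 × Fin n) (ZMod 2)).totalDegree) + 0 := by
            gcongr
            · exact totalDegree_mul _ _
            · simp [totalDegree_C]
        _ ≤ (((X p : MvPolynomial (Fin 3 × Fin n) (ZMod 2)).totalDegree
            + (X q : MvPolynomial (Fin 3 × Fin n) (ZMod 2)).totalDegree) + 1) + 0 := by
            gcongr
            · exact totalDegree_mul _ _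
            · exact (totalDegree_X _).le
        _ ≤ 3 := by simp [totalDegree_X]
    refine le_trans (totalDegree_add _ _) (max_le ?_ ?_)
    · refine le_trans (totalDegree_finset_sum _ _) (Finset.sup_le fun i _ => ?_)
      refine le_trans (totalDegree_finset_sum _ _) (Finset.sup_le fun i' _ => ?_)
      refine le_trans (totalDegree_finset_sum _ _) (Finset.sup_le fun i'' _ => ?_)
      refine le_trans (totalDegree_add _ _) (max_le ?_ (hX3 _ _ _ _))
      refine le_trans (totalDegree_add _ _) (max_le ?_ (hX3 _ _ _ _))
      exact le_trans (totalDegree_add _ _) (max_le (hX3 _ _ _ _) (hX3 _ _ _ _))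
    · refine le_trans (totalDegree_finset_sum _ _) (Finset.sup_le fun i _ => ?_)
      calc (X ((0:Fin 3), i) * C (φ (B * b i))).totalDegree
          ≤ (X ((0:Fin 3), i) : MvPolynomial (Fin 3 × Fin n) (ZMod 2)).totalDegree
            + (C (φ (B * b i)) : MvPolynomial (Fin 3 × Fin n) (ZMod 2)).totalDegree :=
            totalDegree_mul _ _
        _ ≤ 3 := by simp [totalDegree_X, totalDegree_C]
  · intro c
    have hrepr : ∀ z : F, b.repr z j = φ z := fun z => rfl
    rw [hrepr]
    set x1 := ∑ i, c (0, i) • b i with hx1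
    set x2 := ∑ i, c (1, i) • b i with hx2
    set x3 := ∑ i, c (2, i) • b i with hx3
    have sq3 : (x1 * x2 + x1 * x3 + x2 * x3) ^ 2
        = x1 ^ 2 * x2 ^ 2 + x1 ^ 2 * x3 ^ 2 + x2 ^ 2 * x3 ^ 2 := by
      rw [add_pow_char, add_pow_char, mul_pow, mul_pow, mul_pow]
    have key : x1 * ((x1 * x2 + x1 * x3 + x2 * x3) ^ 2 + x1 * x2 * x3 + B)
        = x1 * x1 ^ 2 * x2 ^ 2 + x1 * x1 ^ 2 * x3 ^ 2 + x1 * x2 ^ 2 * x3 ^ 2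
          + x1 ^ 2 * x2 * x3 + x1 * B := by
      rw [sq3]; ring
    rw [key]
    have e1 : x1 * x1 ^ 2 * x2 ^ 2
        = ∑ i, ∑ i', ∑ i'', (c (0,i) * c (0,i') * c (1,i'')) • (b i * b i' ^ 2 * b i'' ^ 2) := by
      rw [hx1, hx2, sqsum, sqsum, tri]
    have e2 : x1 * x1 ^ 2 * x3 ^ 2
        = ∑ i, ∑ i', ∑ i'', (c (0,i) * c (0,i') * c (2,i'')) • (b i * b i' ^ 2 * b i'' ^ 2) := by
      rw [hx1, hx3, sqsum, sqsum, tri]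
    have e3 : x1 * x2 ^ 2 * x3 ^ 2
        = ∑ i, ∑ i', ∑ i'', (c (0,i) * c (1,i') * c (2,i'')) • (b i * b i' ^ 2 * b i'' ^ 2) := by
      rw [hx1, hx2, hx3, sqsum, sqsum, tri]
    have e4 : x1 ^ 2 * x2 * x3
        = ∑ i, ∑ i', ∑ i'', (c (0,i) * c (1,i') * c (2,i'')) • (b i ^ 2 * b i' * b i'') := by
      rw [hx1, hx2, hx3, sqsum, tri]
    have e5 : x1 * B = ∑ i, c (0,i) • (B * b i) := by
      rw [hx1, Finset.sum_mul]
      exact Finset.sum_congr rfl fun i _ => by rw [smul_mul_assoc, mul_comm]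
    rw [e1, e2, e3, e4, e5]
    simp only [map_add, map_sum, map_smul, smul_eq_mul, map_mul, eval_C, eval_X]
    simp only [Finset.sum_add_distrib]
end

section
/- In a field of characteristic 2, for any elements a, b and any z, the polynomial S₃(x₁,x₂,z) = (x₁x₂ + x₁z + x₂z)² + x₁x₂z + B, viewed via Weil descent over F_{2ⁿ} with z a constant, has coordinate Boolean functions of total degree at most 2. -/
/-- Weil descent of `S₃(x₁,x₂,z)` over `F_{2ⁿ}` with `z` a constant.
Every coordinate Boolean function of
`(x₁,x₂) ↦ (x₁x₂ + x₁z + x₂z)² + x₁x₂z + B` is represented by a polynomial over `F₂`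
of total degree at most `2` in the `2n` Boolean variables. -/
theorem stmt11 (n : ℕ) (hn : 1 ≤ n) (F : Type*) [Field F] [Algebra (ZMod 2) F]
    (b : Module.Basis (Fin n) (ZMod 2) F) (z B : F) (j : Fin n) :
    ∃ P : MvPolynomial (Fin 2 × Fin n) (ZMod 2), P.totalDegree ≤ 2 ∧
      ∀ c : Fin 2 × Fin n → ZMod 2,
        MvPolynomial.eval c P =
          b.repr
            (((∑ i, c (0, i) • b i) * (∑ i, c (1, i) • b i)
                + (∑ i, c (0, i) • b i) * z + (∑ i, c (1, i) • b i) * z) ^ 2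
              + (∑ i, c (0, i) • b i) * (∑ i, c (1, i) • b i) * z + B) j := by
  haveI : CharP F 2 := charP_of_injective_algebraMap (algebraMap (ZMod 2) F).injective 2
  classical
  open MvPolynomial in
  refine ⟨(∑ i : Fin n, ∑ k : Fin n,
      C (b.repr ((b i * b k) ^ 2) j) * X (0, i) * X (1, k))
    + (∑ i : Fin n, ∑ k : Fin n,
      C (b.repr (b i * b k * z) j) * X (0, i) * X (1, k))
    + (∑ i : Fin n, C (b.repr ((b i * z) ^ 2) j) * X (0, i))
    + (∑ i : Fin n, C (b.repr ((b i * z) ^ 2) j) * X (1, i))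
    + C (b.repr B j), ?_, ?_⟩
  · have hXX : ∀ (a : ZMod 2) (u v : Fin 2 × Fin n),
        (C a * X u * X v : MvPolynomial (Fin 2 × Fin n) (ZMod 2)).totalDegree ≤ 2 := by
      intro a u v
      refine le_trans (totalDegree_mul _ _) ?_
      refine le_trans (add_le_add_left (totalDegree_mul _ _) _) ?_
      simp [totalDegree_C, totalDegree_X]
    have hX1 : ∀ (a : ZMod 2) (u : Fin 2 × Fin n),
        (C a * X u : MvPolynomial (Fin 2 × Fin n) (ZMod 2)).totalDegree ≤ 2 := by
      intro a u
      refine le_trans (totalDegree_mul _ _) ?_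
      simp [totalDegree_C, totalDegree_X]
    refine le_trans (totalDegree_add _ _) (max_le (le_trans (totalDegree_add _ _)
      (max_le (le_trans (totalDegree_add _ _) (max_le (le_trans (totalDegree_add _ _)
        (max_le ?_ ?_)) ?_)) ?_)) ?_)
    · exact le_trans (totalDegree_finset_sum _ _) (Finset.sup_le fun i _ =>
        le_trans (totalDegree_finset_sum _ _) (Finset.sup_le fun k _ => hXX _ _ _))
    · exact le_trans (totalDegree_finset_sum _ _) (Finset.sup_le fun i _ =>
        le_trans (totalDegree_finset_sum _ _) (Finset.sup_le fun k _ => hXX _ _ _))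
    · exact le_trans (totalDegree_finset_sum _ _) (Finset.sup_le fun i _ => hX1 _ _)
    · exact le_trans (totalDegree_finset_sum _ _) (Finset.sup_le fun i _ => hX1 _ _)
    · simp [totalDegree_C]
  · intro c
    have hsmul : ∀ (a : ZMod 2) (w : F), (a • w) ^ 2 = a • w ^ 2 := by
      intro a w
      rw [smul_pow, ZMod.pow_card]
    have hxy : (∑ i, c (0, i) • b i) * (∑ i, c (1, i) • b i)
        = ∑ i : Fin n, ∑ k : Fin n, (c (0, i) * c (1, k)) • (b i * b k) := by
      rw [Finset.sum_mul_sum]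
      exact Finset.sum_congr rfl fun i _ => Finset.sum_congr rfl fun k _ =>
        smul_mul_smul_comm _ _ _ _
    have hxz : (∑ i, c (0, i) • b i) * z = ∑ i : Fin n, c (0, i) • (b i * z) := by
      rw [Finset.sum_mul]
      exact Finset.sum_congr rfl fun i _ => smul_mul_assoc _ _ _
    have hyz : (∑ i, c (1, i) • b i) * z = ∑ i : Fin n, c (1, i) • (b i * z) := by
      rw [Finset.sum_mul]
      exact Finset.sum_congr rfl fun i _ => smul_mul_assoc _ _ _
    have key : ((∑ i, c (0, i) • b i) * (∑ i, c (1, i) • b i)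
          + (∑ i, c (0, i) • b i) * z + (∑ i, c (1, i) • b i) * z) ^ 2
        + (∑ i, c (0, i) • b i) * (∑ i, c (1, i) • b i) * z + B
        = (∑ i : Fin n, ∑ k : Fin n, (c (0, i) * c (1, k)) • (b i * b k) ^ 2)
          + (∑ i : Fin n, ∑ k : Fin n, (c (0, i) * c (1, k)) • (b i * b k * z))
          + (∑ i : Fin n, c (0, i) • (b i * z) ^ 2)
          + (∑ i : Fin n, c (1, i) • (b i * z) ^ 2) + B := by
      rw [hxy, hxz, hyz, CharTwo.add_sq, CharTwo.add_sq]
      simp only [sum_pow_char, hsmul, Finset.sum_mul, smul_mul_assoc]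
      abel
    rw [key]
    simp only [map_add, map_sum, map_smul, Finsupp.coe_add, Finsupp.coe_finset_sum,
      Finsupp.coe_smul, Pi.add_apply, Finset.sum_apply, Pi.smul_apply, smul_eq_mul,
      MvPolynomial.eval_mul, MvPolynomial.eval_C, MvPolynomial.eval_X, map_mul]
    simp [mul_comm, mul_left_comm, mul_assoc]
end

section
/- Let E: Y² + XY = X³ + AX² + B be an elliptic curve over a field K of characteristic 2 with B ≠ 0, and let P₁ = (x₁,y₁), P₂ = (x₂,y₂) be affine points of E with P₁ + P₂ = (x₃, y₃) an affine point. Then (x₁x₂ + x₁x₃ + x₂x₃)² + x₁x₂x₃ = B, i.e., S₃(x₁,x₂,x₃) evaluated with the negation convention (P₁ + P₂ + (−(P₁+P₂)) = ∞) vanishes; note negation on E preserves the X-coordinate. -/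
open WeierstrassCurve

open Classical in
set_option maxHeartbeats 4000000 in
/-- on the curve `Y² + XY = X³ + AX² + B` over a field of characteristic 2
with `B ≠ 0`, if affine points `P₁ = (x₁,y₁)` and `P₂ = (x₂,y₂)` have affine sum
`P₁ + P₂ = (x₃,y₃)`, then `(x₁x₂ + x₁x₃ + x₂x₃)² + x₁x₂x₃ = B`. -/
theorem stmt17 {K : Type*} [Field K] [CharP K 2] (A B : K) (hB : B ≠ 0)
    (W : WeierstrassCurve.Affine K)
    (hW : W = { a₁ := 1, a₂ := A, a₃ := 0, a₄ := 0, a₆ := B })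
    (x₁ y₁ x₂ y₂ x₃ y₃ : K)
    (h₁ : W.Nonsingular x₁ y₁) (h₂ : W.Nonsingular x₂ y₂) (h₃ : W.Nonsingular x₃ y₃)
    (hadd : Affine.Point.some x₁ y₁ h₁ + Affine.Point.some x₂ y₂ h₂ = Affine.Point.some x₃ y₃ h₃) :
    (x₁ * x₂ + x₁ * x₃ + x₂ * x₃) ^ 2 + x₁ * x₂ * x₃ = B := by
  have h2 : (2 : K) = 0 := by exact_mod_cast CharP.cast_eq_zero K 2
  have ha₁ : W.a₁ = 1 := by rw [hW]
  have ha₂ : W.a₂ = A := by rw [hW]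
  have ha₃ : W.a₃ = (0 : K) := by rw [hW]
  have ha₄ : W.a₄ = (0 : K) := by rw [hW]
  have ha₆ : W.a₆ = B := by rw [hW]
  have e1 : y₁ ^ 2 + x₁ * y₁ = x₁ ^ 3 + A * x₁ ^ 2 + B := by
    have := (W.equation_iff x₁ y₁).mp h₁.1
    rw [ha₁, ha₂, ha₃, ha₄, ha₆] at this
    linear_combination this
  have e2 : y₂ ^ 2 + x₂ * y₂ = x₂ ^ 3 + A * x₂ ^ 2 + B := by
    have := (W.equation_iff x₂ y₂).mp h₂.1
    rw [ha₁, ha₂, ha₃, ha₄, ha₆] at this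
    linear_combination this
  by_cases hv : x₁ = x₂ ∧ y₁ = W.negY x₂ y₂
  · rw [Affine.Point.add_of_Y_eq hv.1 hv.2] at hadd
    simp at hadd
  · rw [Affine.Point.add_some hv] at hadd
    have hx3 : W.addX x₁ x₂ (W.slope x₁ x₂ y₁ y₂) = x₃ := by
      injection hadd
    rw [Affine.addX, ha₁, ha₂] at hx3
    by_cases hx : x₁ = x₂
    · -- tangent case
      have hy : y₁ ≠ W.negY x₂ y₂ := fun h => hv ⟨hx, h⟩
      have hyy : y₁ = y₂ := by
        have hfac : (y₁ - y₂) * (y₁ + y₂ + x₁) = 0 := by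
          linear_combination e1 - e2 + (x₁ ^ 2 + x₁ * x₂ + x₂ ^ 2 + A * x₁ + A * x₂ - y₂) * hx
        rcases mul_eq_zero.mp hfac with h | h
        · exact sub_eq_zero.mp h
        · exact absurd (by rw [Affine.negY, ha₁, ha₃, ← hx]; linear_combination h) hy
      have hden : y₁ - W.negY x₁ y₁ = 2 * y₁ + x₁ := by
        rw [Affine.negY, ha₁, ha₃]; ring
      have hdne : (2 * y₁ + x₁) ≠ 0 := by
        rw [← hden]
        exact sub_ne_zero.mpr (by rwa [← hx, ← hyy] at hy)
      set L := W.slope x₁ x₂ y₁ y₂ with hLdef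
      have hL : L * (2 * y₁ + x₁) = 3 * x₁ ^ 2 + 2 * A * x₁ - y₁ := by
        rw [hLdef, Affine.slope_of_Y_ne hx hy, ha₁, ha₂, ha₄, hden]
        field_simp
        ring
      rw [← hx3]
      have key : (2 * y₁ + x₁) ^ 4 *
          ((x₁ * x₂ + x₁ * (L ^ 2 + 1 * L - A - x₁ - x₂) + x₂ * (L ^ 2 + 1 * L - A - x₁ - x₂)) ^ 2
            + x₁ * x₂ * (L ^ 2 + 1 * L - A - x₁ - x₂) - B) = 0 := by
        linear_combination (x₁^4) * e1 + (x₁^4*y₁ + x₁^5 + x₁^5*L + x₁^6) * hL + ((-1:K) * (x₁^4*x₂*L^2 + x₁^4*x₂*L^4 + x₁^4*x₂*A^2 + x₁^4*x₂^3 + x₁^5*L + x₁^5*L^4 + x₁^5*A + x₁^5*A^2 + x₁^5*x₂ + x₁^5*x₂^2)) * hx + ((-8:K)*y₁^4*B + 8*x₂^2*y₁^4*L^2 + 16*x₂^2*y₁^4*L^3 + 8*x₂^2*y₁^4*L^4 + (-16:K)*x₂^2*y₁^4*A*L + (-16:K)*x₂^2*y₁^4*A*L^2 + 8*x₂^2*y₁^4*A^2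 + (-16:K)*x₂^3*y₁^4*L + (-16:K)*x₂^3*y₁^4*L^2 + 16*x₂^3*y₁^4*A + 8*x₂^4*y₁^4 + (-16:K)*x₁*y₁^3*B + 8*x₁*x₂*y₁^4*L + 24*x₁*x₂*y₁^4*L^2 + 32*x₁*x₂*y₁^4*L^3 + 16*x₁*x₂*y₁^4*L^4 + (-8:K)*x₁*x₂*y₁^4*A + (-32:K)*x₁*x₂*y₁^4*A*L + (-32:K)*x₁*x₂*y₁^4*A*L^2 + 16*x₁*x₂*y₁^4*A^2 + 16*x₁*x₂^2*y₁^3*L^2 + 32*x₁*x₂^2*y₁^3*L^3 + 16*x₁*x₂^2*y₁^3*L^4 + (-32:K)*x₁*x₂^2*y₁^3*A*L + (-32:K)*x₁*x₂^2*y₁^3*A*L^2 + 16*x₁*x₂^2*y₁^3*A^2 + (-8:K)*x₁*x₂^2*y₁^4 + (-32:K)*x₁*x₂^2*y₁^4*L + (-32:K)*x₁*x₂^2*y₁^4*L^2 + 32*x₁*x₂^2*y₁^4*A + (-32:K)*x₁*x₂^3*y₁^3*L + (-32:K)*x₁*x₂^3*y₁^3*L^2 + 32*x₁*x₂^3*y₁^3*A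 + 16*x₁*x₂^3*y₁^4 + 16*x₁*x₂^4*y₁^3 + (-12:K)*x₁^2*y₁^2*B + 8*x₁^2*y₁^4*L^2 + 16*x₁^2*y₁^4*L^3 + 8*x₁^2*y₁^4*L^4 + (-16:K)*x₁^2*y₁^4*A*L + (-16:K)*x₁^2*y₁^4*A*L^2 + 8*x₁^2*y₁^4*A^2 + 16*x₁^2*x₂*y₁^3*L + 48*x₁^2*x₂*y₁^3*L^2 + 64*x₁^2*x₂*y₁^3*L^3 + 32*x₁^2*x₂*y₁^3*L^4 + (-16:K)*x₁^2*x₂*y₁^3*A + (-64:K)*x₁^2*x₂*y₁^3*A*L + (-64:K)*x₁^2*x₂*y₁^3*A*L^2 + 32*x₁^2*x₂*y₁^3*A^2 + (-8:K)*x₁^2*x₂*y₁^4 + (-32:K)*x₁^2*x₂*y₁^4*L + (-32:K)*x₁^2*x₂*y₁^4*L^2 + 32*x₁^2*x₂*y₁^4*A + 12*x₁^2*x₂^2*y₁^2*L^2 + 24*x₁^2*x₂^2*y₁^2*L^3 + 12*x₁^2*x₂^2*y₁^2*L^4 + (-24:K)*x₁^2*x₂^2*y₁^2*A*L + (-24:K)*x₁^2*x₂^2*y₁^2*A*L^2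 + 12*x₁^2*x₂^2*y₁^2*A^2 + (-16:K)*x₁^2*x₂^2*y₁^3 + (-64:K)*x₁^2*x₂^2*y₁^3*L + (-64:K)*x₁^2*x₂^2*y₁^3*L^2 + 64*x₁^2*x₂^2*y₁^3*A + 24*x₁^2*x₂^2*y₁^4 + (-24:K)*x₁^2*x₂^3*y₁^2*L + (-24:K)*x₁^2*x₂^3*y₁^2*L^2 + 24*x₁^2*x₂^3*y₁^2*A + 32*x₁^2*x₂^3*y₁^3 + 12*x₁^2*x₂^4*y₁^2 + (-4:K)*x₁^3*y₁*B + 16*x₁^3*y₁^3*L^2 + 32*x₁^3*y₁^3*L^3 + 16*x₁^3*y₁^3*L^4 + (-32:K)*x₁^3*y₁^3*A*L + (-32:K)*x₁^3*y₁^3*A*L^2 + 16*x₁^3*y₁^3*A^2 + (-16:K)*x₁^3*y₁^4*L + (-16:K)*x₁^3*y₁^4*L^2 + 16*x₁^3*y₁^4*A + 12*x₁^3*x₂*y₁^2*L + 36*x₁^3*x₂*y₁^2*L^2 + 48*x₁^3*x₂*y₁^2*L^3 + 24*x₁^3*x₂*y₁^2*L^4 + (-12:K)*x₁^3*x₂*y₁^2*A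 + (-48:K)*x₁^3*x₂*y₁^2*A*L + (-48:K)*x₁^3*x₂*y₁^2*A*L^2 + 24*x₁^3*x₂*y₁^2*A^2 + (-16:K)*x₁^3*x₂*y₁^3 + (-64:K)*x₁^3*x₂*y₁^3*L + (-64:K)*x₁^3*x₂*y₁^3*L^2 + 64*x₁^3*x₂*y₁^3*A + 16*x₁^3*x₂*y₁^4 + 4*x₁^3*x₂^2*y₁*L^2 + 8*x₁^3*x₂^2*y₁*L^3 + 4*x₁^3*x₂^2*y₁*L^4 + (-8:K)*x₁^3*x₂^2*y₁*A*L + (-8:K)*x₁^3*x₂^2*y₁*A*L^2 + 4*x₁^3*x₂^2*y₁*A^2 + (-12:K)*x₁^3*x₂^2*y₁^2 + (-48:K)*x₁^3*x₂^2*y₁^2*L + (-48:K)*x₁^3*x₂^2*y₁^2*L^2 + 48*x₁^3*x₂^2*y₁^2*A + 48*x₁^3*x₂^2*y₁^3 + (-8:K)*x₁^3*x₂^3*y₁*L + (-8:K)*x₁^3*x₂^3*y₁*L^2 + 8*x₁^3*x₂^3*y₁*A + 24*x₁^3*x₂^3*y₁^2 + 4*x₁^3*x₂^4*y₁ + (-1:K)*x₁^4*y₁^2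 + (-1:K)*x₁^4*y₁^2*L + 12*x₁^4*y₁^2*L^2 + 24*x₁^4*y₁^2*L^3 + 12*x₁^4*y₁^2*L^4 + (-24:K)*x₁^4*y₁^2*A*L + (-24:K)*x₁^4*y₁^2*A*L^2 + 12*x₁^4*y₁^2*A^2 + (-32:K)*x₁^4*y₁^3*L + (-32:K)*x₁^4*y₁^3*L^2 + 32*x₁^4*y₁^3*A + 8*x₁^4*y₁^4 + 4*x₁^4*x₂*y₁*L + 12*x₁^4*x₂*y₁*L^2 + 16*x₁^4*x₂*y₁*L^3 + 8*x₁^4*x₂*y₁*L^4 + (-4:K)*x₁^4*x₂*y₁*A + (-16:K)*x₁^4*x₂*y₁*A*L + (-16:K)*x₁^4*x₂*y₁*A*L^2 + 8*x₁^4*x₂*y₁*A^2 + (-12:K)*x₁^4*x₂*y₁^2 + (-48:K)*x₁^4*x₂*y₁^2*L + (-48:K)*x₁^4*x₂*y₁^2*L^2 + 48*x₁^4*x₂*y₁^2*A + 32*x₁^4*x₂*y₁^3 + x₁^4*x₂^2*L^3 + (-1:K)*x₁^4*x₂^2*A*L + (-1:K)*x₁^4*x₂^2*A*L^2 + (-4:K)*x₁^4*x₂^2*y₁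 + (-16:K)*x₁^4*x₂^2*y₁*L + (-16:K)*x₁^4*x₂^2*y₁*L^2 + 16*x₁^4*x₂^2*y₁*A + 36*x₁^4*x₂^2*y₁^2 + (-1:K)*x₁^4*x₂^3*L + (-1:K)*x₁^4*x₂^3*L^2 + x₁^4*x₂^3*A + 8*x₁^4*x₂^3*y₁ + (-1:K)*x₁^5*y₁ + (-2:K)*x₁^5*y₁*L + 3*x₁^5*y₁*L^2 + 8*x₁^5*y₁*L^3 + 4*x₁^5*y₁*L^4 + x₁^5*y₁*A + (-8:K)*x₁^5*y₁*A*L + (-8:K)*x₁^5*y₁*A*L^2 + 4*x₁^5*y₁*A^2 + (-24:K)*x₁^5*y₁^2*L + (-24:K)*x₁^5*y₁^2*L^2 + 24*x₁^5*y₁^2*A + 16*x₁^5*y₁^3 + 2*x₁^5*x₂*L^2 + 2*x₁^5*x₂*L^3 + x₁^5*x₂*L^4 + (-1:K)*x₁^5*x₂*A + (-2:K)*x₁^5*x₂*A*L + (-2:K)*x₁^5*x₂*A*L^2 + x₁^5*x₂*A^2 + (-4:K)*x₁^5*x₂*y₁ + (-16:K)*x₁^5*x₂*y₁*L + (-16:K)*x₁^5*x₂*y₁*L^2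 + 16*x₁^5*x₂*y₁*A + 24*x₁^5*x₂*y₁^2 + (-1:K)*x₁^5*x₂^2 + (-2:K)*x₁^5*x₂^2*L + (-2:K)*x₁^5*x₂^2*L^2 + 2*x₁^5*x₂^2*A + 12*x₁^5*x₂^2*y₁ + x₁^5*x₂^3 + x₁^6*L^3 + x₁^6*L^4 + 2*x₁^6*A + (-1:K)*x₁^6*A*L^2 + x₁^6*A^2 + x₁^6*y₁ + (-9:K)*x₁^6*y₁*L + (-8:K)*x₁^6*y₁*L^2 + 8*x₁^6*y₁*A + 12*x₁^6*y₁^2 + (-2:K)*x₁^6*x₂*L + (-2:K)*x₁^6*x₂*L^2 + 2*x₁^6*x₂*A + 8*x₁^6*x₂*y₁ + 2*x₁^6*x₂^2 + 2*x₁^7 + (-1:K)*x₁^7*L^2 + 2*x₁^7*A + 4*x₁^7*y₁ + x₁^7*x₂ + 2*x₁^8) * h2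
      have := (mul_eq_zero.mp key).resolve_left (pow_ne_zero 4 hdne)
      linear_combination this
    · -- secant case
      set L := W.slope x₁ x₂ y₁ y₂ with hLdef
      have hsne : x₁ - x₂ ≠ 0 := sub_ne_zero.mpr hx
      have hL : L * (x₁ - x₂) = y₁ - y₂ := by
        rw [hLdef, Affine.slope_of_X_ne hx]
        field_simp
      rw [← hx3]
      have key : (x₁ - x₂) ^ 4 *
          ((x₁ * x₂ + x₁ * (L ^ 2 + 1 * L - A - x₁ - x₂) + x₂ * (L ^ 2 + 1 * L - A - x₁ - x₂)) ^ 2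
            + x₁ * x₂ * (L ^ 2 + 1 * L - A - x₁ - x₂) - B) = 0 := by
        linear_combination (x₂^2*B + x₂^2*y₁^2 + x₂^4 + x₁*x₂^2*y₁ + x₁*x₂^3 + x₁^2*B + x₁^2*y₁^2 + x₁^2*x₂^2 + x₁^2*x₂^2*A + x₁^3*y₁ + x₁^3*x₂ + x₁^3*x₂^2 + x₁^4*A + x₁^5) * e1 + (x₂^2*B + x₂^2*y₂^2 + x₂^3*y₂ + x₂^4*A + x₂^5 + x₁*x₂^3 + x₁^2*B + x₁^2*y₂^2 + x₁^2*x₂*y₂ + x₁^2*x₂^2 + x₁^2*x₂^2*A + x₁^2*x₂^3 + x₁^3*x₂ + x₁^4) * e2 + (x₂^2*y₂^3 + x₂^2*y₁*y₂^2 + x₂^2*y₁^2*y₂ + x₂^2*y₁^3 + x₂^3*y₂^2*L + x₂^3*y₁^2*L + x₂^4*y₂ + x₂^4*y₂*L^2 + x₂^4*y₁ + x₂^4*y₁*L^2 + x₂^5*L + x₂^5*L^3 + x₁*x₂^2*y₂^2*L + x₁*x₂^2*y₁^2*L + x₁*x₂^3*y₂ + x₁*x₂^3*y₁ + x₁*x₂^4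 + x₁*x₂^4*L^3 + x₁^2*y₂^3 + x₁^2*y₁*y₂^2 + x₁^2*y₁^2*y₂ + x₁^2*y₁^3 + x₁^2*x₂*y₂^2*L + x₁^2*x₂*y₁^2*L + x₁^2*x₂^3 + x₁^2*x₂^3*L + x₁^3*y₂^2*L + x₁^3*y₁^2*L + x₁^3*x₂*y₂ + x₁^3*x₂*y₁ + x₁^3*x₂^2 + x₁^3*x₂^2*L + x₁^4*y₂ + x₁^4*y₂*L^2 + x₁^4*y₁ + x₁^4*y₁*L^2 + x₁^4*x₂ + x₁^4*x₂*L^3 + x₁^5*L + x₁^5*L^3) * hL + (x₂^2*B^2 + (-1:K)*x₂^2*y₂^4 + (-1:K)*x₂^3*y₂^3 + x₂^3*y₁*y₂^2*L + x₂^3*y₁^3*L + x₂^4*A*B + (-1:K)*x₂^4*y₂^2 + x₂^4*y₁^2*L^2 + x₂^5*B + x₂^5*y₁*L + x₂^5*y₁*L^3 + x₂^6*L^2 + x₂^6*L^3 + x₂^6*L^4 + (-1:K)*x₂^6*A*L + (-1:K)*x₂^6*A*L^2 + x₂^6*A^2 + (-1:K)*x₂^7*L + (-1:K)*x₂^7*L^2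 + 2*x₂^7*A + x₂^8 + (-1:K)*x₁*x₂^2*y₂^3*L + (-1:K)*x₁*x₂^2*y₁^2*y₂*L + (-1:K)*x₁*x₂^2*y₁^3 + 3*x₁*x₂^3*B + (-1:K)*x₁*x₂^3*y₂^2 + (-1:K)*x₁*x₂^4*y₂ + (-1:K)*x₁*x₂^4*y₂*L^3 + x₁*x₂^5*L + (-1:K)*x₁*x₂^5*L^2 + (-2:K)*x₁*x₂^5*L^3 + (-1:K)*x₁*x₂^5*L^4 + 2*x₁*x₂^5*A*L + 2*x₁*x₂^5*A*L^2 + (-1:K)*x₁*x₂^5*A^2 + 2*x₁*x₂^6*L + 2*x₁*x₂^6*L^2 + (-2:K)*x₁*x₂^6*A + (-1:K)*x₁*x₂^7 + x₁^2*B^2 + (-1:K)*x₁^2*y₂^4 + (-1:K)*x₁^2*x₂*y₂^3 + x₁^2*x₂*y₁*y₂^2*L + x₁^2*x₂*y₁^3*L + (-2:K)*x₁^2*x₂^2*B + 2*x₁^2*x₂^2*A*B + (-1:K)*x₁^2*x₂^2*y₂^2 + (-1:K)*x₁^2*x₂^2*y₁^2 + x₁^2*x₂^3*B + (-1:K)*x₁^2*x₂^3*y₂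 + (-1:K)*x₁^2*x₂^3*y₂*L + (-2:K)*x₁^2*x₂^4*L + (-2:K)*x₁^2*x₂^4*L^2 + (-1:K)*x₁^2*x₂^4*L^3 + (-1:K)*x₁^2*x₂^4*L^4 + 3*x₁^2*x₂^4*A + x₁^2*x₂^4*A*L + x₁^2*x₂^4*A*L^2 + 2*x₁^2*x₂^5 + x₁^2*x₂^5*A + x₁^2*x₂^6 + (-1:K)*x₁^3*y₂^3*L + (-1:K)*x₁^3*y₁^2*y₂*L + (-1:K)*x₁^3*y₁^3 + 3*x₁^3*x₂*B + (-1:K)*x₁^3*x₂*y₂^2 + x₁^3*x₂^2*B + (-1:K)*x₁^3*x₂^2*y₂ + x₁^3*x₂^2*y₁*L + 3*x₁^3*x₂^3*L + 5*x₁^3*x₂^3*L^2 + 4*x₁^3*x₂^3*L^3 + 2*x₁^3*x₂^3*L^4 + (-2:K)*x₁^3*x₂^3*A + (-4:K)*x₁^3*x₂^3*A*L + (-4:K)*x₁^3*x₂^3*A*L^2 + 2*x₁^3*x₂^3*A^2 + (-1:K)*x₁^3*x₂^4*L + (-1:K)*x₁^3*x₂^4*L^2 + x₁^3*x₂^4*A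 + (-1:K)*x₁^3*x₂^5 + x₁^4*A*B + (-1:K)*x₁^4*y₂^2 + (-1:K)*x₁^4*y₂^2*L^2 + (-1:K)*x₁^4*x₂*y₂ + x₁^4*x₂*y₁*L^3 + (-2:K)*x₁^4*x₂^2*L + (-3:K)*x₁^4*x₂^2*L^2 + (-1:K)*x₁^4*x₂^2*L^3 + 3*x₁^4*x₂^2*A + x₁^4*x₂^2*A*L + x₁^4*x₂^2*A*L^2 + (-1:K)*x₁^4*x₂^3*L + (-1:K)*x₁^4*x₂^3*L^2 + x₁^4*x₂^3*A + 2*x₁^4*x₂^4 + x₁^5*B + (-1:K)*x₁^5*y₂*L + (-1:K)*x₁^5*y₂*L^3 + (-2:K)*x₁^5*x₂*L^3 + (-1:K)*x₁^5*x₂*L^4 + 2*x₁^5*x₂*A*L + 2*x₁^5*x₂*A*L^2 + (-1:K)*x₁^5*x₂*A^2 + 2*x₁^5*x₂^2 + x₁^5*x₂^2*A + (-1:K)*x₁^5*x₂^3 + x₁^6*L^3 + (-1:K)*x₁^6*A*L + (-1:K)*x₁^6*A*L^2 + x₁^6*A^2 + 2*x₁^6*x₂*L + 2*x₁^6*x₂*L^2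 + (-2:K)*x₁^6*x₂*A + x₁^6*x₂^2 + (-1:K)*x₁^7*L + (-1:K)*x₁^7*L^2 + 2*x₁^7*A + (-1:K)*x₁^7*x₂ + x₁^8) * h2
      have := (mul_eq_zero.mp key).resolve_left (pow_ne_zero 4 hsne)
      linear_combination this
end
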